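/- arXiv:1903.02896 — 4 statements merged into one kernel-verified Lean document; each statement's English description precedes it below -/
import Mathlib

section
/- For the full shift T on X = ∏_{n∈ℤ} M over a perfect Polish metric space M, the set C_X = {μ ∈ M(T) : supp(μ) = X} of invariant measures with full topological support is a dense Gδ subset of M(T). -/
open Filter MeasureTheory Topology Metric Set
open scoped ENNReal NNReal

noncomputable section
attribute [local instance] Classical.propDecidable

/-- The full (bilateral) shift on the product space `ℤ → M`: `(T x) i = x (i - 1)`. -/
def fullShift {M : Type*} (x : ℤ → M) : ℤ → M := fun i => x (i - 1)

/-- The metric `d(x,y) = ∑_{n ∈ ℤ} 2^{-|n|} ρ(xₙ,yₙ)/(1 + ρ(xₙ,yₙ))` on `ℤ → M`,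
compatible with the product topology. -/
def shiftDist {M : Type*} [MetricSpace M] (x y : ℤ → M) : ℝ :=
  ∑' n : ℤ, (1 / 2 : ℝ) ^ n.natAbs * (dist (x n) (y n) / (1 + dist (x n) (y n)))

/-- Lower local dimension `d̲_μ(x) = liminf_{ε → 0⁺} log μ(B(x,ε)) / log ε` of `μ` at `x`,
with respect to the distance function `d`; by convention it is `∞` if some ball
centered at `x` has measure zero. -/
def lowerLocalDim {X : Type*} [MeasurableSpace X] (d : X → X → ℝ)
    (μ : Measure X) (x : X) : ℝ≥0∞ :=
  if ∃ ε > 0, μ {y | d x y < ε} = 0 then ⊤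
  else liminf (fun ε : ℝ =>
    ENNReal.ofReal (Real.log (μ {y | d x y < ε}).toReal / Real.log ε)) (𝓝[>] (0 : ℝ))

/-- Upper local dimension `d̄_μ(x) = limsup_{ε → 0⁺} log μ(B(x,ε)) / log ε`. -/
def upperLocalDim {X : Type*} [MeasurableSpace X] (d : X → X → ℝ)
    (μ : Measure X) (x : X) : ℝ≥0∞ :=
  if ∃ ε > 0, μ {y | d x y < ε} = 0 then ⊤
  else limsup (fun ε : ℝ =>
    ENNReal.ofReal (Real.log (μ {y | d x y < ε}).toReal / Real.log ε)) (𝓝[>] (0 : ℝ))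

/-- The ratio `log τ_r(x) / (- log r)`, where `τ_r(x) = inf {n ≥ 1 | Tⁿ x ∈ B̄(x,r)}` is the
first return time of `x` to the closed ball `B̄(x,r)`; by convention it is `∞` when the
return time is infinite. -/
def recRatio {X : Type*} (d : X → X → ℝ) (T : X → X) (x : X) (r : ℝ) : ℝ≥0∞ :=
  if ∃ n : ℕ, 1 ≤ n ∧ d (T^[n] x) x ≤ r then
    ENNReal.ofReal
      (Real.log ((sInf {n : ℕ | 1 ≤ n ∧ d (T^[n] x) x ≤ r} : ℕ) : ℝ) / (- Real.log r))
  else ⊤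

/-- Lower recurrence rate `R̲(x) = liminf_{r → 0⁺} log τ_r(x) / (- log r)`. -/
def lowerRecRate {X : Type*} (d : X → X → ℝ) (T : X → X) (x : X) : ℝ≥0∞ :=
  liminf (recRatio d T x) (𝓝[>] (0 : ℝ))

/-- Upper recurrence rate `R̄(x) = limsup_{r → 0⁺} log τ_r(x) / (- log r)`. -/
def upperRecRate {X : Type*} (d : X → X → ℝ) (T : X → X) (x : X) : ℝ≥0∞ :=
  limsup (recRatio d T x) (𝓝[>] (0 : ℝ))

/-- The ratio `log τ_r(x,y) / (- log r)`, where `τ_r(x,y) = inf {n ≥ 1 | Tⁿ x ∈ B̄(y,r)}` is the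
first entrance time of the orbit of `x` into the closed ball `B̄(y,r)`; by convention `∞`
when the entrance time is infinite. -/
def waitRatio {X : Type*} (d : X → X → ℝ) (T : X → X) (x y : X) (r : ℝ) : ℝ≥0∞ :=
  if ∃ n : ℕ, 1 ≤ n ∧ d (T^[n] x) y ≤ r then
    ENNReal.ofReal
      (Real.log ((sInf {n : ℕ | 1 ≤ n ∧ d (T^[n] x) y ≤ r} : ℕ) : ℝ) / (- Real.log r))
  else ⊤

/-- Lower quantitative waiting time indicator `R̲(x,y)`. -/
def lowerWaitRate {X : Type*} (d : X → X → ℝ) (T : X → X) (x y : X) : ℝ≥0∞ :=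
  liminf (waitRatio d T x y) (𝓝[>] (0 : ℝ))

/-- Upper quantitative waiting time indicator `R̄(x,y)`. -/
def upperWaitRate {X : Type*} (d : X → X → ℝ) (T : X → X) (x y : X) : ℝ≥0∞ :=
  limsup (waitRatio d T x y) (𝓝[>] (0 : ℝ))

/-- The entropy `H(P) = ∑_c -μ(P_c) log μ(P_c)` of the finite measurable partition
`P_c = f ⁻¹ {c}` of `X` induced by a map `f` into a finite set. -/
def partitionEntropy {X F : Type*} [MeasurableSpace X] [Fintype F]
    (μ : Measure X) (f : X → F) : ℝ :=
  ∑ c : F, Real.negMulLog ((μ (f ⁻¹' {c})).toReal)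

/-- The Kolmogorov–Sinai (measure-theoretic) entropy `h_μ(T)`: the supremum, over all finite
measurable partitions (coded by measurable maps `f : X → Fin k`), of the limit of
`H(⋁_{i<n} T⁻ⁱ P) / n`. -/
def kolmogorovSinaiEntropy {X : Type*} [MeasurableSpace X] (T : X → X) (μ : Measure X) :
    ℝ≥0∞ :=
  ⨆ (k : ℕ) (f : X → Fin k) (_ : Measurable f),
    ENNReal.ofReal
      (liminf (fun n : ℕ =>
        partitionEntropy μ (fun x (i : Fin n) => f (T^[(i : ℕ)] x)) / n) atTop)

set_option linter.unusedSectionVars false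
set_option maxHeartbeats 1000000

section Aux
variable {M : Type*} [MetricSpace M] [CompleteSpace M]
    [TopologicalSpace.SeparableSpace M] [PerfectSpace M]
    [MeasurableSpace M] [BorelSpace M]

lemma continuous_fullShift : Continuous (fullShift (M := M)) :=
  continuous_pi fun i => continuous_apply (i - 1)

lemma measurable_fullShift : Measurable (fullShift (M := M)) :=
  continuous_fullShift.measurable

lemma fullShift_iterate (x : ℤ → M) (j : ℕ) :
    fullShift^[j] x = fun i => x (i - j) := by
  induction j with
  | zero => simp
  | succ n ih =>
      rw [Function.iterate_succ_apply', ih]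
      funext i
      simp only [fullShift]
      congr 1
      push_cast
      ring

/-- The uniform measure on the (pre-)orbit of a point. -/
def orbitMeasure (x : ℤ → M) (K : ℕ) : Measure (ℤ → M) :=
  (K : ℝ≥0∞)⁻¹ • ∑ j ∈ Finset.range K, Measure.dirac (fullShift^[j] x)

lemma orbitMeasure_univ (x : ℤ → M) {K : ℕ} (hK : 0 < K) :
    orbitMeasure x K Set.univ = 1 := by
  simp only [orbitMeasure, Measure.smul_apply, Measure.coe_finset_sum, Finset.sum_apply,
    smul_eq_mul]
  rw [Finset.sum_congr rfl (fun j _ => Measure.dirac_apply_of_mem (Set.mem_univ _))]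
  simp only [Finset.sum_const, Finset.card_range, nsmul_eq_mul, mul_one]
  exact ENNReal.inv_mul_cancel (by exact_mod_cast hK.ne') (ENNReal.natCast_ne_top K)

lemma measure_map_finset_sum {ι : Type*} (s : Finset ι) (μ : ι → Measure (ℤ → M))
    {f : (ℤ → M) → (ℤ → M)} (hf : Measurable f) :
    (∑ j ∈ s, μ j).map f = ∑ j ∈ s, (μ j).map f := by
  classical
  induction s using Finset.induction with
  | empty => simp
  | insert _ _ h ih =>
      rw [Finset.sum_insert h, Finset.sum_insert h, Measure.map_add _ _ hf, ih]

lemma orbitMeasure_map (x : ℤ → M) {K : ℕ} (hK : 0 < K)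
    (hx : fullShift^[K] x = x) :
    (orbitMeasure x K).map fullShift = orbitMeasure x K := by
  obtain ⟨n, rfl⟩ : ∃ n, K = n + 1 := ⟨K - 1, by omega⟩
  simp only [orbitMeasure]
  rw [Measure.map_smul, measure_map_finset_sum _ _ measurable_fullShift]
  congr 1
  have key : ∀ j : ℕ, (Measure.dirac (fullShift^[j] x)).map fullShift
      = Measure.dirac (fullShift^[j + 1] x) := by
    intro j
    rw [Measure.map_dirac' measurable_fullShift, Function.iterate_succ_apply']
  rw [Finset.sum_congr rfl (fun j _ => key j)]
  rw [Finset.sum_range_succ, Finset.sum_range_succ' (fun j => Measure.dirac (fullShift^[j] x)) n]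
  rw [hx]
  simp [add_comm]

lemma orbitMeasure_isProbability (x : ℤ → M) {K : ℕ} (hK : 0 < K) :
    IsProbabilityMeasure (orbitMeasure x K) :=
  ⟨orbitMeasure_univ x hK⟩

lemma orbitMeasure_pos_of_mem (x : ℤ → M) {K : ℕ} (hK : 0 < K)
    {U : Set (ℤ → M)} (hxU : x ∈ U) : 0 < orbitMeasure x K U := by
  simp only [orbitMeasure, Measure.smul_apply, Measure.coe_finset_sum, Finset.sum_apply,
    smul_eq_mul]
  have h0 : (Measure.dirac (fullShift^[0] x)) U = 1 := by
    simpa using Measure.dirac_apply_of_mem hxU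
  have hle : (1 : ℝ≥0∞) ≤ ∑ j ∈ Finset.range K, Measure.dirac (fullShift^[j] x) U := by
    rw [← h0]
    exact Finset.single_le_sum (f := fun j => Measure.dirac (fullShift^[j] x) U)
      (fun _ _ => zero_le) (Finset.mem_range.mpr hK)
  have hKinv : (0 : ℝ≥0∞) < (K : ℝ≥0∞)⁻¹ :=
    ENNReal.inv_pos.mpr (ENNReal.natCast_ne_top K)
  calc (0 : ℝ≥0∞) < (K : ℝ≥0∞)⁻¹ * 1 := by simpa using hKinv
    _ ≤ _ := mul_le_mul_right hle _

end Aux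

section Periodic
variable {M : Type*} [MetricSpace M] [CompleteSpace M]
    [TopologicalSpace.SeparableSpace M] [PerfectSpace M]
    [MeasurableSpace M] [BorelSpace M]

/-- A periodic point built from a list of indices into a dense sequence. -/
def perPt (d : ℕ → M) (l : List ℕ) : ℤ → M :=
  fun i => d (l.getD (i % (max l.length 1 : ℕ) : ℤ).toNat 0)

lemma perPt_periodic (d : ℕ → M) (l : List ℕ) :
    fullShift^[max l.length 1] (perPt d l) = perPt d l := by
  rw [fullShift_iterate]
  funext i
  simp only [perPt]
  congr 2
  rw [Int.sub_emod, Int.emod_self, sub_zero, Int.emod_emod_of_dvd _ dvd_rfl]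

lemma exists_perPt_mem (d : ℕ → M) (hd : DenseRange d)
    {U : Set (ℤ → M)} (hU : IsOpen U) (hne : U.Nonempty) :
    ∃ l : List ℕ, l ≠ [] ∧ perPt d l ∈ U := by
  obtain ⟨x, hx⟩ := hne
  obtain ⟨I, u, hu, hsub⟩ := isOpen_pi_iff.mp hU x hx
  set N : ℕ := I.sup (fun i => i.natAbs) with hN
  have hIN : ∀ i ∈ I, i.natAbs ≤ N := fun i hi => Finset.le_sup hi
  set k : ℕ := 2 * N + 1 with hk
  have hch : ∀ i : ℤ, ∃ n : ℕ, d n ∈ (if i ∈ I then u i else Set.univ) := by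
    intro i
    by_cases hi : i ∈ I
    · simp only [hi, if_pos]
      exact hd.exists_mem_open (hu i hi).1 ⟨x i, (hu i hi).2⟩
    · simp only [hi, if_neg, not_false_iff]
      exact ⟨0, Set.mem_univ _⟩
  choose c hc using hch
  set f : ℕ → ℕ := fun j => c (if (j : ℤ) ≤ (N : ℤ) then (j : ℤ) else (j : ℤ) - k) with hf
  set l : List ℕ := (List.range k).map f with hl
  have hlen : l.length = k := by simp [hl]
  have hlne : l ≠ [] := by
    intro h
    rw [h] at hlen
    simp [hk] at hlen
  refine ⟨l, hlne, hsub ?_⟩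
  have hmax : max l.length 1 = k := by rw [hlen]; omega
  intro i hiI
  have hiN : i.natAbs ≤ N := hIN i hiI
  have hkpos : (0 : ℤ) < (k : ℤ) := by positivity
  set r : ℤ := i % (k : ℤ) with hr
  have hr0 : 0 ≤ r := Int.emod_nonneg i (by omega)
  have hrk : r < (k : ℤ) := Int.emod_lt_of_pos i hkpos
  have hkN : (k : ℤ) = 2 * N + 1 := by exact_mod_cast congrArg (Nat.cast : ℕ → ℤ) hk
  have hri : r = i ∨ r = i + k := by
    rcases le_or_gt 0 i with hi0 | hi0
    · left
      rw [hr]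
      exact Int.emod_eq_of_lt hi0 (by omega)
    · right
      rw [hr, show i % (k : ℤ) = (i + (k : ℤ) * 1) % k from (Int.add_mul_emod_self_left i (k : ℤ) 1).symm,
        mul_one]
      exact Int.emod_eq_of_lt (by omega) (by omega)
  have harg : l.getD r.toNat 0 = c i := by
    have hlt : r.toNat < l.length := by rw [hlen]; omega
    rw [List.getD_eq_getElem l 0 hlt]
    simp only [hl, List.getElem_map, List.getElem_range, hf]
    congr 1
    rw [Int.toNat_of_nonneg hr0]
    split_ifs with h <;> omega
  have hgoal : perPt d l i = d (c i) := by
    simp only [perPt, hmax, ← hr, harg]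
  rw [hgoal]
  have := hc i
  rwa [if_pos (Finset.mem_coe.mp hiI)] at this

end Periodic

section Nu
variable {M : Type*} [MetricSpace M] [CompleteSpace M]
    [TopologicalSpace.SeparableSpace M] [PerfectSpace M]
    [MeasurableSpace M] [BorelSpace M]

/-- weights -/
def wt (n : ℕ) : ℝ≥0∞ := (2 : ℝ≥0∞)⁻¹ ^ (n + 1)

lemma wt_pos (n : ℕ) : 0 < wt n := by
  simp only [wt]
  exact ENNReal.pow_pos (ENNReal.inv_pos.mpr ENNReal.ofNat_ne_top) _

lemma wt_tsum : ∑' n : ℕ, wt n = 1 := by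
  simp only [wt, pow_succ]
  rw [ENNReal.tsum_mul_right, ENNReal.tsum_geometric, ENNReal.one_sub_inv_two, inv_inv]
  exact ENNReal.mul_inv_cancel two_ne_zero ENNReal.ofNat_ne_top

/-- The list indexed by `n`. -/
def lSeq (n : ℕ) : List ℕ := Denumerable.ofNat (List ℕ) n

/-- A shift-invariant measure of full support on `ℤ → M`. -/
def nuZero (d : ℕ → M) : Measure (ℤ → M) :=
  Measure.sum (fun n : ℕ =>
    wt n • orbitMeasure (perPt d (lSeq n)) (max (lSeq n).length 1))

lemma maxlen_pos (l : List ℕ) : 0 < max l.length 1 :=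
  lt_of_lt_of_le one_pos (le_max_right _ _)

lemma nuZero_isProbability (d : ℕ → M) : IsProbabilityMeasure (nuZero d) := by
  constructor
  rw [nuZero, Measure.sum_apply _ MeasurableSet.univ]
  calc ∑' n : ℕ, (wt n • orbitMeasure (perPt d (lSeq n)) (max (lSeq n).length 1)) Set.univ
      = ∑' n : ℕ, wt n := by
        congr 1
        funext n
        rw [Measure.smul_apply, orbitMeasure_univ _ (maxlen_pos _), smul_eq_mul, mul_one]
    _ = 1 := wt_tsum

lemma nuZero_map (d : ℕ → M) : (nuZero d).map fullShift = nuZero d := by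
  ext s hs
  rw [Measure.map_apply measurable_fullShift hs, nuZero,
    Measure.sum_apply _ (hs.preimage measurable_fullShift), Measure.sum_apply _ hs]
  congr 1
  funext n
  simp only [Measure.smul_apply, smul_eq_mul]
  congr 1
  calc orbitMeasure (perPt d (lSeq n)) (max (lSeq n).length 1) (fullShift ⁻¹' s)
      = (orbitMeasure (perPt d (lSeq n)) (max (lSeq n).length 1)).map fullShift s :=
        (Measure.map_apply measurable_fullShift hs).symm
    _ = _ := by
        rw [orbitMeasure_map _ (maxlen_pos _) (perPt_periodic d (lSeq n))]

lemma nuZero_pos (d : ℕ → M) (hd : DenseRange d) {U : Set (ℤ → M)}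
    (hU : IsOpen U) (hne : U.Nonempty) : 0 < nuZero d U := by
  obtain ⟨l, -, hl⟩ := exists_perPt_mem d hd hU hne
  have hofn : lSeq (Encodable.encode l) = l := Denumerable.ofNat_encode l
  have hle : (wt (Encodable.encode l) •
      orbitMeasure (perPt d (lSeq (Encodable.encode l)))
        (max (lSeq (Encodable.encode l)).length 1)) U ≤ nuZero d U :=
    Measure.le_sum _ (Encodable.encode l) U
  refine lt_of_lt_of_le ?_ hle
  rw [Measure.smul_apply, smul_eq_mul]
  have h1 : 0 < orbitMeasure (perPt d (lSeq (Encodable.encode l)))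
      (max (lSeq (Encodable.encode l)).length 1) U := by
    apply orbitMeasure_pos_of_mem _ (maxlen_pos _)
    rw [hofn]
    exact hl
  exact ENNReal.mul_pos (wt_pos _).ne' h1.ne'

lemma nuZero_openPos (d : ℕ → M) (hd : DenseRange d) :
    (nuZero d).IsOpenPosMeasure :=
  ⟨fun U hU hne => (nuZero_pos d hd hU hne).ne'⟩

end Nu

section Main
variable {M : Type*} [MetricSpace M] [CompleteSpace M]
    [TopologicalSpace.SeparableSpace M] [PerfectSpace M]
    [MeasurableSpace M] [BorelSpace M]

lemma isOpen_posMeasure {U : Set (ℤ → M)} (hU : IsOpen U) :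
    IsOpen {ν : ProbabilityMeasure (ℤ → M) | 0 < ν.toMeasure U} := by
  rw [isOpen_iff_mem_nhds]
  intro ν₀ hν₀
  set S := {ν : ProbabilityMeasure (ℤ → M) | 0 < ν.toMeasure U} with hS
  rcases Filter.eq_or_neBot (𝓝 ν₀ ⊓ 𝓟 Sᶜ) with hbot | hne
  · rw [Filter.inf_principal_eq_bot, compl_compl] at hbot
    exact hbot
  · exfalso
    have htend : Tendsto (fun ν : ProbabilityMeasure (ℤ → M) => ν)
        (𝓝 ν₀ ⊓ 𝓟 Sᶜ) (𝓝 ν₀) := tendsto_id.mono_left inf_le_left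
    have hlim := MeasureTheory.le_measure_liminf_of_limsup_measure_compl_le
      (μ := ν₀.toMeasure)
      (μs := fun ν : ProbabilityMeasure (ℤ → M) => ν.toMeasure)
      (L := 𝓝 ν₀ ⊓ 𝓟 Sᶜ) hU.measurableSet
      (ProbabilityMeasure.limsup_measure_closed_le_of_tendsto htend
        (isClosed_compl_iff.mpr hU))
    have hev : ∀ᶠ ν in 𝓝 ν₀ ⊓ 𝓟 Sᶜ,
        (fun ν : ProbabilityMeasure (ℤ → M) => ν.toMeasure U) ν = (0 : ℝ≥0∞) := by
      refine eventually_inf_principal.mpr (Eventually.of_forall fun ν hν => ?_)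
      have : ¬ 0 < ν.toMeasure U := hν
      simpa [pos_iff_ne_zero, not_not] using this
    have hzero : liminf (fun ν : ProbabilityMeasure (ℤ → M) => ν.toMeasure U)
        (𝓝 ν₀ ⊓ 𝓟 Sᶜ) = 0 := by
      rw [liminf_congr hev, liminf_const]
    rw [hzero] at hlim
    exact hν₀.ne' (le_antisymm hlim zero_le)

/-- The mixing coefficient. -/
def eps (n : ℕ) : ℝ≥0∞ := ((n + 1 : ℕ) : ℝ≥0∞)⁻¹

lemma eps_pos (n : ℕ) : 0 < eps n := ENNReal.inv_pos.mpr (ENNReal.natCast_ne_top _)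

lemma eps_le_one (n : ℕ) : eps n ≤ 1 := by
  rw [eps, ENNReal.inv_le_one]
  exact_mod_cast Nat.one_le_iff_ne_zero.mpr (Nat.succ_ne_zero n)

lemma eps_tendsto : Tendsto eps atTop (𝓝 0) :=
  ENNReal.tendsto_inv_nat_nhds_zero.comp (tendsto_add_atTop_nat 1)

/-- Mixture of an invariant measure with the fully supported invariant measure. -/
def mixM (d : ℕ → M) (μ : Measure (ℤ → M)) (n : ℕ) : Measure (ℤ → M) :=
  (1 - eps n) • μ + eps n • nuZero d

lemma mixM_isProbability (d : ℕ → M) (μ : Measure (ℤ → M)) [IsProbabilityMeasure μ] (n : ℕ) :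
    IsProbabilityMeasure (mixM d μ n) := by
  constructor
  haveI := nuZero_isProbability d
  simp only [mixM, Measure.add_apply, Measure.smul_apply, smul_eq_mul,
    measure_univ, mul_one]
  exact tsub_add_cancel_of_le (eps_le_one n)

lemma mixM_map (d : ℕ → M) (μ : Measure (ℤ → M)) (hμ : μ.map fullShift = μ) (n : ℕ) :
    (mixM d μ n).map fullShift = mixM d μ n := by
  rw [mixM, Measure.map_add _ _ measurable_fullShift, Measure.map_smul, Measure.map_smul,
    hμ, nuZero_map]

lemma mixM_pos (d : ℕ → M) (hd : DenseRange d) (μ : Measure (ℤ → M)) (n : ℕ) :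
    (mixM d μ n).IsOpenPosMeasure := by
  refine ⟨fun U hU hne => ?_⟩
  have h1 : 0 < eps n * nuZero d U :=
    ENNReal.mul_pos (eps_pos n).ne' (nuZero_pos d hd hU hne).ne'
  have h2 : eps n * nuZero d U ≤ mixM d μ n U := by
    simp only [mixM, Measure.add_apply, Measure.smul_apply, smul_eq_mul]
    exact self_le_add_left _ _
  exact (lt_of_lt_of_le h1 h2).ne'

/-- The mixture as a probability measure. -/
def mixP (d : ℕ → M) (μ : ProbabilityMeasure (ℤ → M)) (n : ℕ) : ProbabilityMeasure (ℤ → M) :=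
  ⟨mixM d μ.toMeasure n, mixM_isProbability d μ.toMeasure n⟩

lemma mixP_tendsto (d : ℕ → M) (μ : ProbabilityMeasure (ℤ → M)) :
    Tendsto (mixP d μ) atTop (𝓝 μ) := by
  refine (ProbabilityMeasure.tendsto_iff_forall_lintegral_tendsto (Ω := ℤ → M)).mpr fun f => ?_
  haveI := nuZero_isProbability d
  have hA : (∫⁻ x, f x ∂μ.toMeasure) ≠ ∞ :=
    (f.lintegral_lt_top_of_nnreal μ.toMeasure).ne
  have hB : (∫⁻ x, f x ∂(nuZero d)) ≠ ∞ :=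
    (f.lintegral_lt_top_of_nnreal (nuZero d)).ne
  have hrw : ∀ n, (∫⁻ x, f x ∂((mixP d μ n) : Measure (ℤ → M)))
      = (1 - eps n) * (∫⁻ x, f x ∂μ.toMeasure) + eps n * (∫⁻ x, f x ∂(nuZero d)) := by
    intro n
    show (∫⁻ x, f x ∂(mixM d μ.toMeasure n)) = _
    rw [mixM, lintegral_add_measure, lintegral_smul_measure, lintegral_smul_measure]
    simp only [smul_eq_mul]
  simp only [hrw]
  have h1 : Tendsto (fun n => (1 : ℝ≥0∞) - eps n) atTop (𝓝 1) := by
    have := ((ENNReal.continuous_sub_left ENNReal.one_ne_top).tendsto 0).comp eps_tendsto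
    simpa [Function.comp_def] using this
  have h2 : Tendsto (fun n => (1 - eps n) * (∫⁻ x, f x ∂μ.toMeasure)) atTop
      (𝓝 ((1 : ℝ≥0∞) * (∫⁻ x, f x ∂μ.toMeasure))) :=
    ENNReal.Tendsto.mul_const h1 (Or.inr hA)
  have h3 : Tendsto (fun n => eps n * (∫⁻ x, f x ∂(nuZero d))) atTop
      (𝓝 ((0 : ℝ≥0∞) * (∫⁻ x, f x ∂(nuZero d)))) :=
    ENNReal.Tendsto.mul_const eps_tendsto (Or.inr hB)
  have := h2.add h3
  simpa using this

end Main


end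

/-- For the full shift on `ℤ → M` over a perfect Polish metric space `M`,
the set of invariant measures with full topological support (equivalently, giving positive
measure to every nonempty open set) is a dense `Gδ` subset of `M(T)`. -/
theorem fullShift_fullSupport_denseGδ {M : Type*} [MetricSpace M] [CompleteSpace M]
    [TopologicalSpace.SeparableSpace M] [PerfectSpace M]
    [MeasurableSpace M] [BorelSpace M] :
    IsGδ {μ : {ν : ProbabilityMeasure (ℤ → M) // ν.toMeasure.map fullShift = ν.toMeasure} |
        μ.1.toMeasure.IsOpenPosMeasure} ∧
    Dense {μ : {ν : ProbabilityMeasure (ℤ → M) // ν.toMeasure.map fullShift = ν.toMeasure} |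
        μ.1.toMeasure.IsOpenPosMeasure} := by
  rcases isEmpty_or_nonempty M with hM | hM
  · haveI : IsEmpty (ℤ → M) := ⟨fun f => IsEmpty.false (f 0)⟩
    haveI : IsEmpty (ProbabilityMeasure (ℤ → M)) := by
      refine ⟨fun ν => ?_⟩
      have h := ν.2.measure_univ
      rw [Set.univ_eq_empty_iff.mpr ‹IsEmpty (ℤ → M)›, measure_empty] at h
      exact zero_ne_one h
    haveI : IsEmpty {ν : ProbabilityMeasure (ℤ → M) //
        ν.toMeasure.map fullShift = ν.toMeasure} := ⟨fun μ => IsEmpty.false μ.1⟩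
    constructor
    · have : {μ : {ν : ProbabilityMeasure (ℤ → M) //
          ν.toMeasure.map fullShift = ν.toMeasure} | μ.1.toMeasure.IsOpenPosMeasure} = ∅ :=
        Set.eq_empty_of_isEmpty _
      rw [this]
      exact isOpen_empty.isGδ
    · exact fun μ => isEmptyElim μ
  · set d : ℕ → M := TopologicalSpace.denseSeq M with hd
    have hdr : DenseRange d := TopologicalSpace.denseRange_denseSeq M
    constructor
    · -- Gδ
      obtain ⟨b, bc, bne, bbasis⟩ := TopologicalSpace.exists_countable_basis (ℤ → M)
      have hSeq : {μ : {ν : ProbabilityMeasure (ℤ → M) //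
            ν.toMeasure.map fullShift = ν.toMeasure} | μ.1.toMeasure.IsOpenPosMeasure}
          = ⋂ U ∈ b, {μ : {ν : ProbabilityMeasure (ℤ → M) //
            ν.toMeasure.map fullShift = ν.toMeasure} | 0 < μ.1.toMeasure U} := by
        ext μ
        simp only [Set.mem_iInter, Set.mem_setOf_eq]
        constructor
        · intro h U hUb
          haveI := h
          refine (bbasis.isOpen hUb).measure_pos μ.1.toMeasure ?_
          exact Set.nonempty_iff_ne_empty.mpr (fun he => bne (he ▸ hUb))
        · intro h
          refine ⟨fun V hV hVne => ?_⟩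
          obtain ⟨x, hx⟩ := hVne
          obtain ⟨W, hWb, hxW, hWV⟩ := bbasis.exists_subset_of_mem_open hx hV
          exact (lt_of_lt_of_le (h W hWb) (measure_mono hWV)).ne'
      rw [hSeq]
      refine IsGδ.biInter bc (fun U hUb => ?_)
      exact ((isOpen_posMeasure (bbasis.isOpen hUb)).preimage continuous_subtype_val).isGδ
    · -- dense
      rw [dense_iff_inter_open]
      rintro V hV ⟨μ, hμV⟩
      obtain ⟨W, hW, hWV⟩ := isOpen_induced_iff.mp hV
      have hμW : (μ : ProbabilityMeasure (ℤ → M)) ∈ W := by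
        rw [← hWV] at hμV
        exact hμV
      have htd := mixP_tendsto d μ.1
      obtain ⟨n, hn⟩ := (htd.eventually (hW.mem_nhds hμW)).exists
      refine ⟨⟨mixP d μ.1 n, ?_⟩, ?_, ?_⟩
      · exact mixM_map d μ.1.toMeasure μ.2 n
      · rw [← hWV]
        exact hn
      · exact mixM_pos d hdr μ.1.toMeasure n
end

section
/- Let μ be a Borel probability measure on a Polish metric space X. Then the μ-essential infimum of the lower local dimension d̲_μ equals dim_H^-(μ) = inf{dim_H(E) : E Borel, μ(E) > 0}, and the μ-essential supremum of d̲_μ equals dim_H^+(μ) = inf{dim_H(E) : E Borel, μ(X∖E) = 0}; in particular dim_H^-(μ) ≤ dim_H^+(μ). -/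
open Filter MeasureTheory Topology Metric Set
open scoped ENNReal NNReal

noncomputable section
attribute [local instance] Classical.propDecidable

end
section Aux

variable {X : Type*} [MetricSpace X] [MeasurableSpace X] [BorelSpace X]

private lemma setOf_dist_lt_eq_ball (x : X) (ε : ℝ) :
    {y | dist x y < ε} = Metric.ball x ε := by
  ext y; simp [Metric.mem_ball, dist_comm]

/-- From `ofReal a < d̲_μ(x)` we get a uniform small-ball upper bound near `x`. -/
private lemma exists_forall_ball_le (μ : Measure X) [IsProbabilityMeasure μ] {x : X} {a : ℝ}
    (ha : 0 < a) (h : ENNReal.ofReal a < lowerLocalDim dist μ x) :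
    ∃ ε₀ : ℝ, 0 < ε₀ ∧ ∀ ε : ℝ, 0 < ε → ε < ε₀ →
      μ (ball x ε) ≤ ENNReal.ofReal (ε ^ a) := by
  unfold lowerLocalDim at h
  by_cases hz : ∃ ε > 0, μ {y | dist x y < ε} = 0
  · obtain ⟨ε₁, hε₁, hμ⟩ := hz
    rw [setOf_dist_lt_eq_ball] at hμ
    refine ⟨ε₁, hε₁, fun ε hε hlt => ?_⟩
    have h0 : μ (ball x ε) = 0 :=
      le_antisymm ((measure_mono (ball_subset_ball hlt.le)).trans hμ.le) zero_le
    simp [h0]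
  · rw [if_neg hz] at h
    have h' := Filter.eventually_lt_of_lt_liminf h
    have hIoo : ∀ᶠ ε in 𝓝[>] (0 : ℝ), ε ∈ Set.Ioo (0 : ℝ) 1 :=
      Ioo_mem_nhdsGT_of_mem ⟨le_refl 0, one_pos⟩
    obtain ⟨ε₀, hε₀, hsub⟩ :=
      mem_nhdsGT_iff_exists_Ioo_subset.1 (h'.and hIoo)
    refine ⟨ε₀, hε₀, fun ε hε hlt => ?_⟩
    obtain ⟨hra, hε01⟩ := hsub ⟨hε, hlt⟩
    push_neg at hz
    set B : ℝ≥0∞ := μ {y | dist x y < ε} with hB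
    have hBne : B ≠ ⊤ := measure_ne_top μ _
    have hεlt1 : ε < 1 := hε01.2
    have hlogε : Real.log ε < 0 := Real.log_neg hε hεlt1
    have hratio : a < Real.log B.toReal / Real.log ε :=
      (ENNReal.ofReal_lt_ofReal_iff_of_nonneg ha.le).1 hra
    have hlog : Real.log B.toReal < a * Real.log ε := by
      rwa [lt_div_iff_of_neg hlogε] at hratio
    rw [← Real.log_rpow hε a] at hlog
    rcases eq_or_lt_of_le (show (0:ℝ) ≤ B.toReal from ENNReal.toReal_nonneg) with h0 | h0
    · have hB0 : B = 0 := by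
        rcases ENNReal.toReal_eq_zero_iff B |>.1 h0.symm with h | h
        · exact h
        · exact absurd h hBne
      rw [hB, setOf_dist_lt_eq_ball] at hB0
      simp [hB0]
    · have hBlt : B.toReal < ε ^ a := by
        have := Real.exp_lt_exp.2 hlog
        rwa [Real.exp_log h0, Real.exp_log (Real.rpow_pos_of_pos hε a)] at this
      have : B ≤ ENNReal.ofReal (ε ^ a) := by
        rw [← ENNReal.ofReal_toReal hBne]
        exact ENNReal.ofReal_le_ofReal hBlt.le
      rwa [hB, setOf_dist_lt_eq_ball] at this

/-- From `d̲_μ(x) < ofReal t` we get arbitrarily small balls with large measure. -/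
private lemma exists_ball_ge (μ : Measure X) [IsProbabilityMeasure μ] {x : X} {t : ℝ}
    (ht : 0 < t) (h : lowerLocalDim dist μ x < ENNReal.ofReal t) {ρ : ℝ} (hρ : 0 < ρ) :
    ∃ ε : ℝ, 0 < ε ∧ ε < ρ ∧ ENNReal.ofReal (ε ^ t) ≤ μ (ball x ε) := by
  unfold lowerLocalDim at h
  by_cases hz : ∃ ε > 0, μ {y | dist x y < ε} = 0
  · rw [if_pos hz] at h; exact absurd h (by simp)
  rw [if_neg hz] at h
  push_neg at hz
  have hfreq := Filter.frequently_lt_of_liminf_lt (h := h)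
  have hIoo : ∀ᶠ ε in 𝓝[>] (0 : ℝ), ε ∈ Set.Ioo (0 : ℝ) (min ρ 1) :=
    Ioo_mem_nhdsGT_of_mem ⟨le_refl 0, lt_min hρ one_pos⟩
  obtain ⟨ε, hlt, hmem⟩ := (hfreq.and_eventually hIoo).exists
  have hε : 0 < ε := hmem.1
  have hεlt1 : ε < 1 := lt_of_lt_of_le hmem.2 (min_le_right _ _)
  refine ⟨ε, hε, lt_of_lt_of_le hmem.2 (min_le_left _ _), ?_⟩
  set B : ℝ≥0∞ := μ {y | dist x y < ε} with hB
  have hBne : B ≠ ⊤ := measure_ne_top μ _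
  have hB0 : B ≠ 0 := hz ε hε
  have hBpos : 0 < B.toReal := ENNReal.toReal_pos hB0 hBne
  have hlogε : Real.log ε < 0 := Real.log_neg hε hεlt1
  have hratio : Real.log B.toReal / Real.log ε < t :=
    (ENNReal.ofReal_lt_ofReal_iff ht).1 hlt
  have hlog : t * Real.log ε < Real.log B.toReal := by
    rwa [div_lt_iff_of_neg hlogε] at hratio
  rw [← Real.log_rpow hε t] at hlog
  have hgt : ε ^ t < B.toReal := by
    have := Real.exp_lt_exp.2 hlog
    rwa [Real.exp_log hBpos, Real.exp_log (Real.rpow_pos_of_pos hε t)] at this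
  have : ENNReal.ofReal (ε ^ t) ≤ B := by
    rw [← ENNReal.ofReal_toReal hBne]
    exact ENNReal.ofReal_le_ofReal hgt.le
  rwa [hB, setOf_dist_lt_eq_ball] at this

/-- Mass distribution principle: if all small balls centered in `A` satisfy
`μ(B(x,ε)) ≤ ε^s`, then `μ A ≤ μH[s] A`. -/
private lemma measure_le_hausdorffMeasure_of_ball_le (μ : Measure X) {s : ℝ} (hs : 0 < s)
    {A : Set X} {ε₀ : ℝ} (hε₀ : 0 < ε₀)
    (h : ∀ x ∈ A, ∀ ε : ℝ, 0 < ε → ε < ε₀ → μ (ball x ε) ≤ ENNReal.ofReal (ε ^ s)) :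
    μ A ≤ μH[s] A := by
  rw [MeasureTheory.Measure.hausdorffMeasure_apply]
  refine le_iSup₂_of_le (ENNReal.ofReal (ε₀ / 2)) (by simp [ENNReal.ofReal_pos, hε₀, half_pos]) ?_
  refine le_iInf fun c => le_iInf fun hcov => le_iInf fun hdiam => ?_
  have hsub : A ⊆ ⋃ n, c n ∩ A := by
    intro x hx
    obtain ⟨n, hn⟩ := Set.mem_iUnion.1 (hcov hx)
    exact Set.mem_iUnion.2 ⟨n, hn, hx⟩
  calc μ A ≤ ∑' n, μ (c n ∩ A) :=
        (measure_mono hsub).trans (measure_iUnion_le _)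
    _ ≤ ∑' n, ⨆ _ : (c n).Nonempty, EMetric.diam (c n) ^ s := by
        refine ENNReal.tsum_le_tsum fun n => ?_
        rcases Set.eq_empty_or_nonempty (c n ∩ A) with hN | hN
        · simp [hN]
        obtain ⟨x, hxc, hxA⟩ := hN
        have hne : (c n).Nonempty := ⟨x, hxc⟩
        rw [iSup_pos hne]
        have hDne : EMetric.diam (c n) ≠ ⊤ :=
          ne_top_of_le_ne_top ENNReal.ofReal_ne_top (hdiam n)
        have hDle : (EMetric.diam (c n)).toReal ≤ ε₀ / 2 :=
          ENNReal.toReal_le_of_le_ofReal (by positivity) (hdiam n)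
        -- μ (c n ∩ A) ≤ ofReal (η ^ s) for every η ∈ ((EMetric.diam (c n)).toReal, ε₀)
        have hball : ∀ η : ℝ, (EMetric.diam (c n)).toReal < η → η < ε₀ → μ (c n ∩ A) ≤ ENNReal.ofReal (η ^ s) := by
          intro η hη1 hη2
          have hηpos : 0 < η := lt_of_le_of_lt ENNReal.toReal_nonneg hη1
          have hsubball : c n ⊆ ball x η := by
            intro y hy
            have : edist y x ≤ EMetric.diam (c n) := EMetric.edist_le_diam_of_mem hy hxc
            have hd : dist y x ≤ (EMetric.diam (c n)).toReal := by
              rw [dist_edist]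
              exact ENNReal.toReal_mono hDne this
            exact lt_of_le_of_lt hd hη1
          exact le_trans (measure_mono (Set.inter_subset_left.trans hsubball))
            (h x hxA η hηpos hη2)
        -- pass to the limit η → (EMetric.diam (c n)).toReal⁺
        have hlim : Tendsto (fun η : ℝ => ENNReal.ofReal (η ^ s)) (𝓝[>] (EMetric.diam (c n)).toReal)
            (𝓝 (ENNReal.ofReal ((EMetric.diam (c n)).toReal ^ s))) := by
          refine (ENNReal.continuous_ofReal.tendsto _).comp ?_
          refine Tendsto.mono_left ?_ nhdsWithin_le_nhds
          exact (Real.continuousAt_rpow_const _ _ (Or.inr hs.le)).tendsto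
        have hev : ∀ᶠ η in 𝓝[>] (EMetric.diam (c n)).toReal, μ (c n ∩ A) ≤ ENNReal.ofReal (η ^ s) := by
          have hmem : Set.Ioo (EMetric.diam (c n)).toReal ε₀ ∈ 𝓝[>] (EMetric.diam (c n)).toReal :=
            Ioo_mem_nhdsGT_of_mem ⟨le_refl _, lt_of_le_of_lt hDle (by linarith)⟩
          filter_upwards [hmem] with η hη
          exact hball η hη.1 hη.2
        have hfin := ge_of_tendsto hlim hev
        calc μ (c n ∩ A) ≤ ENNReal.ofReal ((EMetric.diam (c n)).toReal ^ s) := hfin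
          _ = EMetric.diam (c n) ^ s := by
            rw [← ENNReal.ofReal_rpow_of_nonneg ENNReal.toReal_nonneg hs.le,
              ENNReal.ofReal_toReal hDne]

end Aux
section Aux2

variable {X : Type*} [MetricSpace X] [MeasurableSpace X] [BorelSpace X]

/-- If every point of `A` has lower local dimension `< t`, then `dimH A ≤ t`. -/
private lemma dimH_le_of_lowerLocalDim_lt (μ : Measure X) [IsProbabilityMeasure μ]
    [TopologicalSpace.SeparableSpace X] {A : Set X} {t : ℝ≥0} (ht : 0 < t)
    (hA : ∀ x ∈ A, lowerLocalDim dist μ x < ENNReal.ofReal (t : ℝ)) :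
    dimH A ≤ (t : ℝ≥0∞) := by
  have htR : (0:ℝ) < (t:ℝ) := ht
  -- choose radii
  have hchoice : ∀ (n : ℕ) (x : X), ∃ ε : ℝ, x ∈ A →
      0 < ε ∧ ε < 1 / (n + 1 : ℝ) ∧ ENNReal.ofReal (ε ^ (t:ℝ)) ≤ μ (ball x ε) := by
    intro n x
    by_cases hx : x ∈ A
    · obtain ⟨ε, h1, h2, h3⟩ := exists_ball_ge μ htR (hA x hx)
        (ρ := 1 / (n + 1 : ℝ)) (by positivity)
      exact ⟨ε, fun _ => ⟨h1, h2, h3⟩⟩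
    · exact ⟨1, fun h => absurd h hx⟩
  choose rad hrad using hchoice
  -- for each n, a countable disjoint Vitali family
  have main : ∀ n : ℕ, ∃ u : Set X, u.Countable ∧
      (A ⊆ ⋃ i : u, closedBall (i : X) (4 * rad n i)) ∧
      (∀ i : u, EMetric.diam (closedBall (i : X) (4 * rad n i))
          ≤ ENNReal.ofReal (8 * (1 / (n + 1 : ℝ)))) ∧
      (∑' i : u, EMetric.diam (closedBall (i : X) (4 * rad n i)) ^ (t : ℝ)
          ≤ ENNReal.ofReal (8 ^ (t : ℝ))) := by
    intro n
    obtain ⟨u, huA, hdisj, hcov⟩ :=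
      Vitali.exists_disjoint_subfamily_covering_enlargement_closedBall A id (rad n)
        (1 / (n + 1 : ℝ)) (fun a ha => (hrad n a ha).2.1.le) 4 (by norm_num)
    have hradpos : ∀ b ∈ u, 0 < rad n b := fun b hb => (hrad n b (huA hb)).1
    have hcount : u.Countable := by
      refine hdisj.countable_of_nonempty_interior fun b hb => ?_
      refine Set.Nonempty.mono (ball_subset_interior_closedBall) ?_
      exact ⟨b, mem_ball_self (hradpos b hb)⟩
    have hdiam : ∀ b ∈ u, EMetric.diam (closedBall b (4 * rad n b))
        ≤ ENNReal.ofReal (8 * rad n b) := by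
      intro b hb
      have h4 : (0:ℝ) ≤ 4 * rad n b := by nlinarith [hradpos b hb]
      rw [← Metric.emetric_closedBall (x := b) h4]
      refine le_trans EMetric.diam_closedBall ?_
      rw [← ENNReal.ofReal_ofNat, ← ENNReal.ofReal_mul (by norm_num)]
      exact ENNReal.ofReal_le_ofReal (by ring_nf; exact le_refl _)
    refine ⟨u, hcount, ?_, ?_, ?_⟩
    · intro a ha
      obtain ⟨b, hb, hsub⟩ := hcov a ha
      have : a ∈ closedBall (id a) (rad n a) := mem_closedBall_self (hrad n a ha).1.le
      exact Set.mem_iUnion.2 ⟨⟨b, hb⟩, hsub this⟩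
    · rintro ⟨b, hb⟩
      refine (hdiam b hb).trans (ENNReal.ofReal_le_ofReal ?_)
      have := (hrad n b (huA hb)).2.1
      nlinarith [hradpos b hb]
    · calc ∑' i : u, EMetric.diam (closedBall (i : X) (4 * rad n i)) ^ (t : ℝ)
          ≤ ∑' i : u, ENNReal.ofReal (8 ^ (t:ℝ)) * ENNReal.ofReal ((rad n i) ^ (t:ℝ)) := by
            refine ENNReal.tsum_le_tsum fun i => ?_
            refine le_trans (ENNReal.rpow_le_rpow (hdiam i i.2) t.coe_nonneg) ?_
            rw [ENNReal.ofReal_rpow_of_pos (mul_pos (by norm_num) (hradpos i i.2)),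
              Real.mul_rpow (by norm_num) (hradpos i i.2).le,
              ENNReal.ofReal_mul (by positivity)]
        _ = ENNReal.ofReal (8 ^ (t:ℝ)) * ∑' i : u, ENNReal.ofReal ((rad n i) ^ (t:ℝ)) :=
            ENNReal.tsum_mul_left
        _ ≤ ENNReal.ofReal (8 ^ (t:ℝ)) * ∑' i : u, μ (ball (i : X) (rad n i)) := by
            refine mul_le_mul_right (ENNReal.tsum_le_tsum fun i => ?_) _
            exact (hrad n i (huA i.2)).2.2
        _ = ENNReal.ofReal (8 ^ (t:ℝ)) * μ (⋃ b ∈ u, ball b (rad n b)) := by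
            congr 1
            exact (measure_biUnion hcount
              (fun b hb c hc hbc => Disjoint.mono ball_subset_closedBall
                ball_subset_closedBall (hdisj hb hc hbc))
              fun b _ => measurableSet_ball).symm
        _ ≤ ENNReal.ofReal (8 ^ (t:ℝ)) * 1 := by
            exact mul_le_mul_right (prob_le_one) _
        _ = ENNReal.ofReal (8 ^ (t:ℝ)) := mul_one _
  choose U hU1 hU2 hU3 hU4 using main
  haveI : ∀ n : ℕ, Countable (U n) := fun n => (hU1 n).to_subtype
  have hμH : μH[(t:ℝ)] A ≤ ENNReal.ofReal (8 ^ (t:ℝ)) := by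
    have hle := MeasureTheory.Measure.hausdorffMeasure_le_liminf_tsum (t:ℝ) A
      (l := atTop) (fun n : ℕ => ENNReal.ofReal (8 * (1 / (n + 1 : ℝ))))
      ?_ (fun n (i : U n) => closedBall (i : X) (4 * rad n i))
      (Eventually.of_forall fun n => hU3 n) (Eventually.of_forall fun n => hU2 n)
    · refine hle.trans ?_
      have : ∀ n : ℕ, (∑' i : U n, EMetric.diam (closedBall (i : X) (4 * rad n i)) ^ (t : ℝ))
          ≤ ENNReal.ofReal (8 ^ (t : ℝ)) := hU4
      calc liminf (fun n => ∑' i : U n,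
              EMetric.diam (closedBall (i : X) (4 * rad n i)) ^ (t : ℝ)) atTop
          ≤ liminf (fun _ : ℕ => ENNReal.ofReal (8 ^ (t : ℝ))) atTop :=
            Filter.liminf_le_liminf (Eventually.of_forall this)
        _ = ENNReal.ofReal (8 ^ (t : ℝ)) := Filter.liminf_const _
    · have h0 : Tendsto (fun n : ℕ => 8 * (1 / (n + 1 : ℝ))) atTop (𝓝 0) := by
        have := tendsto_one_div_add_atTop_nhds_zero_nat (𝕜 := ℝ)
        simpa using this.const_mul 8
      have h1 := ENNReal.tendsto_ofReal h0
      simpa using h1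
  exact dimH_le_of_hausdorffMeasure_ne_top
    (ne_top_of_le_ne_top ENNReal.ofReal_ne_top hμH)

/-- If `E` meets `{d̲ > a}` in non-null outer measure, then `dimH E ≥ a`. -/
private lemma le_dimH_of_inter_ne_zero (μ : Measure X) [IsProbabilityMeasure μ]
    {E : Set X} {a : ℝ≥0} (ha : 0 < a)
    (hne : μ (E ∩ {x | ENNReal.ofReal (a:ℝ) < lowerLocalDim dist μ x}) ≠ 0) :
    (a : ℝ≥0∞) ≤ dimH E := by
  have haR : (0:ℝ) < (a:ℝ) := ha
  set S := {x | ENNReal.ofReal (a:ℝ) < lowerLocalDim dist μ x} with hS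
  set Aset : ℕ → Set X := fun n => {x | ∀ ε : ℝ, 0 < ε → ε < 1 / (n + 1 : ℝ) →
    μ (ball x ε) ≤ ENNReal.ofReal (ε ^ (a:ℝ))} with hAset
  have hSA : S ⊆ ⋃ n, Aset n := by
    intro x hx
    obtain ⟨ε₀, hε₀, hx'⟩ := exists_forall_ball_le μ haR hx
    obtain ⟨n, hn⟩ := exists_nat_one_div_lt hε₀
    exact Set.mem_iUnion.2 ⟨n, fun ε h1 h2 => hx' ε h1 (h2.trans hn)⟩
  have hsum : μ (E ∩ S) ≤ ∑' n, μ (E ∩ Aset n) := by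
    refine le_trans (measure_mono ?_) (measure_iUnion_le _)
    intro x ⟨hxE, hxS⟩
    obtain ⟨n, hn⟩ := Set.mem_iUnion.1 (hSA hxS)
    exact Set.mem_iUnion.2 ⟨n, hxE, hn⟩
  have hex : ∃ n, μ (E ∩ Aset n) ≠ 0 := by
    by_contra hall
    push_neg at hall
    rw [show (∑' n, μ (E ∩ Aset n)) = 0 from by simp [hall]] at hsum
    exact hne (le_antisymm hsum zero_le)
  obtain ⟨n, hn⟩ := hex
  have hmass : μ (E ∩ Aset n) ≤ μH[(a:ℝ)] (E ∩ Aset n) := by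
    refine measure_le_hausdorffMeasure_of_ball_le μ haR
      (ε₀ := 1 / (n + 1 : ℝ)) (by positivity) ?_
    rintro x ⟨_, hxA⟩ ε h1 h2
    exact hxA ε h1 h2
  have hdim : (a : ℝ≥0∞) ≤ dimH (E ∩ Aset n) := by
    refine le_dimH_of_hausdorffMeasure_ne_zero fun h0 => hn ?_
    exact le_antisymm (hmass.trans_eq h0) zero_le
  exact hdim.trans (dimH_mono Set.inter_subset_left)

end Aux2
/-- For a Borel probability measure `μ` on a Polish metric space `X`, the
`μ`-essential infimum of the lower local dimension equals
`dim_H^-(μ) = inf {dim_H E : E Borel, μ E > 0}`, the `μ`-essential supremum of the lower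
local dimension equals `dim_H^+(μ) = inf {dim_H E : E Borel, μ Eᶜ = 0}`; in particular
`dim_H^-(μ) ≤ dim_H^+(μ)`. -/
theorem essInf_essSup_lowerLocalDim_eq_hausdorffDims {X : Type*} [MetricSpace X]
    [CompleteSpace X] [TopologicalSpace.SeparableSpace X]
    [MeasurableSpace X] [BorelSpace X]
    (μ : Measure X) [IsProbabilityMeasure μ] :
    (essInf (lowerLocalDim dist μ) μ
        = ⨅ (E : Set X) (_ : MeasurableSet E) (_ : 0 < μ E), dimH E) ∧
    (essSup (lowerLocalDim dist μ) μ
        = ⨅ (E : Set X) (_ : MeasurableSet E) (_ : μ Eᶜ = 0), dimH E) ∧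
    ((⨅ (E : Set X) (_ : MeasurableSet E) (_ : 0 < μ E), dimH E)
        ≤ ⨅ (E : Set X) (_ : MeasurableSet E) (_ : μ Eᶜ = 0), dimH E) := by
  set f := lowerLocalDim dist μ with hfdef
  have inter_ne : ∀ E S : Set X, μ Sᶜ = 0 → μ E ≠ 0 → μ (E ∩ S) ≠ 0 := by
    intro E S hS hE h0
    apply hE
    have hle : μ E ≤ μ (E ∩ S) + μ (E ∩ Sᶜ) := by
      refine (measure_mono ?_).trans (measure_union_le _ _)
      intro x hx
      by_cases hxS : x ∈ S
      · exact Or.inl ⟨hx, hxS⟩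
      · exact Or.inr ⟨hx, hxS⟩
    have h2 : μ (E ∩ Sᶜ) = 0 := measure_mono_null Set.inter_subset_right hS
    rw [h0, h2, add_zero] at hle
    exact le_antisymm hle zero_le
  have keyGE : ∀ (E : Set X) (a : ℝ≥0), 0 < a →
      μ (E ∩ {x | (a : ℝ≥0∞) < f x}) ≠ 0 → (a : ℝ≥0∞) ≤ dimH E := by
    intro E a ha h
    refine le_dimH_of_inter_ne_zero μ ha ?_
    simpa [ENNReal.ofReal_coe_nnreal] using h
  have h1 : essInf f μ ≤ ⨅ (E : Set X) (_ : MeasurableSet E) (_ : 0 < μ E), dimH E := by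
    refine le_iInf fun E => le_iInf fun _ => le_iInf fun hE => ?_
    refine ENNReal.le_of_forall_nnreal_lt fun a ha => ?_
    rcases (zero_le : (0:ℝ≥0) ≤ a).eq_or_lt with h0 | h0
    · simp [← h0]
    refine keyGE E a h0 ?_
    refine inter_ne E _ ?_ (ne_of_gt hE)
    have hae : ∀ᵐ x ∂μ, essInf f μ ≤ f x := ae_essInf_le
    have h0' : μ {x | ¬ essInf f μ ≤ f x} = 0 := ae_iff.1 hae
    refine measure_mono_null ?_ h0'
    intro x hx
    simp only [Set.mem_compl_iff, Set.mem_setOf_eq, not_lt] at hx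
    exact fun hc => absurd (hc.trans hx) (not_le.mpr ha)
  have h2 : (⨅ (E : Set X) (_ : MeasurableSet E) (_ : 0 < μ E), dimH E) ≤ essInf f μ := by
    by_contra hcon
    push_neg at hcon
    obtain ⟨t, ht1, ht2⟩ := ENNReal.lt_iff_exists_nnreal_btwn.1 hcon
    obtain ⟨t', ht1', ht2'⟩ := ENNReal.lt_iff_exists_nnreal_btwn.1 ht1
    have ht'0 : 0 < t' := by
      rcases (zero_le : (0:ℝ≥0) ≤ t').eq_or_lt with h | h
      · exact absurd ht1' (by simp [← h])
      · exact h
    set A := {x | f x < (t' : ℝ≥0∞)} with hA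
    have hAne : μ A ≠ 0 := by
      intro hnull
      have haem : ∀ᵐ x ∂μ, (t' : ℝ≥0∞) ≤ f x := by
        rw [ae_iff]
        convert hnull using 2
        ext x
        simp [hA, not_le]
      exact absurd (lt_of_lt_of_le ht1' (le_essInf_of_ae_le _ haem)) (lt_irrefl _)
    have hdimA : dimH A ≤ (t' : ℝ≥0∞) := by
      refine dimH_le_of_lowerLocalDim_lt μ ht'0 fun x hx => ?_
      rw [ENNReal.ofReal_coe_nnreal]
      exact hx
    have hHt : μH[((t : ℝ≥0) : ℝ)] A = 0 :=
      hausdorffMeasure_of_dimH_lt (lt_of_le_of_lt hdimA ht2')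
    have hdimB : dimH (toMeasurable (μH[((t : ℝ≥0) : ℝ)]) A) ≤ (t : ℝ≥0∞) := by
      refine dimH_le_of_hausdorffMeasure_ne_top ?_
      rw [measure_toMeasurable, hHt]
      exact ENNReal.zero_ne_top
    set E := toMeasurable (μH[((t : ℝ≥0) : ℝ)]) A ∩ toMeasurable μ A with hE
    have hEmeas : MeasurableSet E :=
      (measurableSet_toMeasurable _ _).inter (measurableSet_toMeasurable _ _)
    have hEpos : 0 < μ E := by
      refine lt_of_lt_of_le ?_ (measure_mono (Set.subset_inter (subset_toMeasurable _ _)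
        (subset_toMeasurable _ _)))
      exact pos_iff_ne_zero.2 hAne
    have hle : (⨅ (E : Set X) (_ : MeasurableSet E) (_ : 0 < μ E), dimH E) ≤ dimH E :=
      iInf_le_of_le E (iInf_le_of_le hEmeas (iInf_le_of_le hEpos le_rfl))
    have hdimE : dimH E ≤ (t : ℝ≥0∞) :=
      le_trans (dimH_mono Set.inter_subset_left) hdimB
    exact absurd (lt_of_le_of_lt (hle.trans hdimE) ht2) (lt_irrefl _)
  have h3 : essSup f μ ≤ ⨅ (E : Set X) (_ : MeasurableSet E) (_ : μ Eᶜ = 0), dimH E := by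
    refine le_iInf fun E => le_iInf fun _ => le_iInf fun hEc => ?_
    refine ENNReal.le_of_forall_nnreal_lt fun a ha => ?_
    rcases (zero_le : (0:ℝ≥0) ≤ a).eq_or_lt with h0 | h0
    · simp [← h0]
    have hSne : μ {x | (a : ℝ≥0∞) < f x} ≠ 0 := by
      intro hnull
      have haem : ∀ᵐ x ∂μ, f x ≤ (a : ℝ≥0∞) := by
        rw [ae_iff]
        convert hnull using 2
        ext x
        simp [not_le]
      exact absurd (lt_of_lt_of_le ha (essSup_le_of_ae_le _ haem)) (lt_irrefl _)
    refine keyGE E a h0 ?_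
    rw [Set.inter_comm]
    exact inter_ne _ E hEc hSne
  have h4 : (⨅ (E : Set X) (_ : MeasurableSet E) (_ : μ Eᶜ = 0), dimH E) ≤ essSup f μ := by
    rcases eq_or_ne (essSup f μ) ⊤ with htop | htop
    · rw [htop]; exact le_top
    have hN : μ {x | essSup f μ < f x} = 0 := by
      have hae := ENNReal.ae_le_essSup (μ := μ) f
      rw [ae_iff] at hae
      convert hae using 2
      ext x
      simp [not_le]
    set E := (toMeasurable μ {x | essSup f μ < f x})ᶜ with hE
    have hEmeas : MeasurableSet E := (measurableSet_toMeasurable _ _).compl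
    have hEc : μ Eᶜ = 0 := by
      rw [hE, compl_compl, measure_toMeasurable]
      exact hN
    have hEsub : ∀ x ∈ E, f x ≤ essSup f μ := by
      intro x hx
      by_contra hc
      exact hx (subset_toMeasurable _ _ (by simpa using not_le.1 hc))
    have hdimE : dimH E ≤ essSup f μ := by
      by_contra hcon
      push_neg at hcon
      obtain ⟨t, ht1, ht2⟩ := ENNReal.lt_iff_exists_nnreal_btwn.1 hcon
      have ht0 : 0 < t := by
        rcases (zero_le : (0:ℝ≥0) ≤ t).eq_or_lt with h | h
        · exact absurd ht1 (by simp [← h])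
        · exact h
      have hdimE' : dimH E ≤ (t : ℝ≥0∞) := by
        refine dimH_le_of_lowerLocalDim_lt μ ht0 fun x hx => ?_
        rw [ENNReal.ofReal_coe_nnreal]
        exact lt_of_le_of_lt (hEsub x hx) ht1
      exact absurd ht2 (not_lt.2 hdimE')
    exact iInf_le_of_le E (iInf_le_of_le hEmeas (iInf_le_of_le hEc hdimE))
  have h5 : (⨅ (E : Set X) (_ : MeasurableSet E) (_ : 0 < μ E), dimH E)
      ≤ ⨅ (E : Set X) (_ : MeasurableSet E) (_ : μ Eᶜ = 0), dimH E := by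
    refine le_iInf fun E => le_iInf fun hEm => le_iInf fun hEc => ?_
    have hpos : 0 < μ E := by
      rw [pos_iff_ne_zero]
      intro h0
      have huniv : μ (Set.univ : Set X) = 0 := by
        have hl := measure_union_le (μ := μ) E Eᶜ
        rw [Set.union_compl_self, h0, hEc, add_zero] at hl
        exact le_antisymm hl zero_le
      rw [measure_univ] at huniv
      exact one_ne_zero huniv
    exact iInf_le_of_le E (iInf_le_of_le hEm (iInf_le_of_le hpos le_rfl))
  exact ⟨le_antisymm h1 h2, le_antisymm h3 h4, h5⟩
end

section
/- Let (X,d) be a Polish metric space and let M(X) be the space of Borel probability measures on X with the weak topology. For every α > 0, the set {μ ∈ M(X) : d̄_μ(x) ≥ α for μ-a.e. x ∈ X} (equivalently, {μ : dim_P^-(μ) ≥ α}) is a Gδ subset of M(X), and the set {μ ∈ M(X) : d̲_μ(x) = 0 for μ-a.e. x ∈ X} (equivalently, {μ : dim_H(μ) = 0}) is a Gδ subset of M(X). -/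
open Filter MeasureTheory Topology Metric Set
open scoped ENNReal NNReal

noncomputable section
attribute [local instance] Classical.propDecidable

end

section GdeltaAux

open ENNReal

variable {X : Type*} [MetricSpace X] [MeasurableSpace X] [OpensMeasurableSpace X]

/-- Points having some ball of radius in `(0,δ)` whose measure is `< radius ^ β`. -/
def dimSetLt (μ : Measure X) (β δ : ℝ) : Set X :=
  {x : X | ∃ ε : ℝ, 0 < ε ∧ ε < δ ∧ μ (ball x ε) < ENNReal.ofReal (ε ^ β)}

/-- Points having some ball of radius in `(0,δ)` whose measure is `> radius ^ γ`. -/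
def dimSetGt (μ : Measure X) (γ δ : ℝ) : Set X :=
  {x : X | ∃ ε : ℝ, 0 < ε ∧ ε < δ ∧ ENNReal.ofReal (ε ^ γ) < μ (ball x ε)}

lemma exists_smaller_radius {m ε β : ℝ} (hε : 0 < ε) (h : m < ε ^ β) :
    ∃ ε' : ℝ, 0 < ε' ∧ ε' < ε ∧ m < ε' ^ β := by
  have hc : ContinuousAt (fun t : ℝ => t ^ β) ε :=
    Real.continuousAt_rpow_const ε β (Or.inl hε.ne')
  have hev : ∀ᶠ t in 𝓝[<] ε, m < t ^ β :=
    (hc.tendsto.eventually (eventually_gt_nhds h)).filter_mono nhdsWithin_le_nhds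
  have hmem : ∀ᶠ t in 𝓝[<] ε, t ∈ Set.Ioo (0 : ℝ) ε :=
    Ioo_mem_nhdsLT_of_mem ⟨hε, le_refl ε⟩
  obtain ⟨ε', hε'1, hε'2⟩ := (hev.and hmem).exists
  exact ⟨ε', hε'2.1, hε'2.2, hε'1⟩

lemma exists_larger_radius {m ε δ γ : ℝ} (hε : 0 < ε) (hεδ : ε < δ) (h : ε ^ γ < m) :
    ∃ ε' : ℝ, ε < ε' ∧ ε' < δ ∧ ε' ^ γ < m := by
  have hc : ContinuousAt (fun t : ℝ => t ^ γ) ε :=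
    Real.continuousAt_rpow_const ε γ (Or.inl hε.ne')
  have hev : ∀ᶠ t in 𝓝[>] ε, t ^ γ < m :=
    (hc.tendsto.eventually (eventually_lt_nhds h)).filter_mono nhdsWithin_le_nhds
  have hmem : ∀ᶠ t in 𝓝[>] ε, t ∈ Set.Ioo ε δ :=
    Ioo_mem_nhdsGT_of_mem ⟨le_refl ε, hεδ⟩
  obtain ⟨ε', hε'1, hε'2⟩ := (hev.and hmem).exists
  exact ⟨ε', hε'2.1, hε'2.2, hε'1⟩

lemma isOpen_dimSetLt (μ : Measure X) [IsFiniteMeasure μ] (β δ : ℝ) :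
    IsOpen (dimSetLt μ β δ) := by
  rw [Metric.isOpen_iff]
  rintro x ⟨ε, hε0, hεδ, hx⟩
  have hm : (μ (ball x ε)).toReal < ε ^ β :=
    (ENNReal.lt_ofReal_iff_toReal_lt (measure_ne_top μ _)).mp hx
  obtain ⟨ε', hε'0, hε'ε, hm'⟩ := exists_smaller_radius hε0 hm
  refine ⟨ε - ε', by linarith, fun y hy => ?_⟩
  rw [mem_ball] at hy
  refine ⟨ε', hε'0, hε'ε.trans hεδ, lt_of_le_of_lt (measure_mono fun z hz => ?_)
    ((ENNReal.lt_ofReal_iff_toReal_lt (measure_ne_top μ _)).mpr hm')⟩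
  rw [mem_ball] at hz ⊢
  have := dist_triangle z y x
  linarith

lemma isOpen_dimSetGt (μ : Measure X) [IsFiniteMeasure μ] (γ δ : ℝ) :
    IsOpen (dimSetGt μ γ δ) := by
  rw [Metric.isOpen_iff]
  rintro x ⟨ε, hε0, hεδ, hx⟩
  have hm : ε ^ γ < (μ (ball x ε)).toReal :=
    (ENNReal.ofReal_lt_iff_lt_toReal (Real.rpow_pos_of_pos hε0 γ).le
      (measure_ne_top μ _)).mp hx
  obtain ⟨ε', hεε', hε'δ, hm'⟩ := exists_larger_radius hε0 hεδ hm
  refine ⟨ε' - ε, by linarith, fun y hy => ?_⟩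
  rw [mem_ball] at hy
  refine ⟨ε', hε0.trans hεε', hε'δ, lt_of_lt_of_le
    ((ENNReal.ofReal_lt_iff_lt_toReal (Real.rpow_pos_of_pos (hε0.trans hεε') γ).le
      (measure_ne_top μ _)).mpr hm') (measure_mono fun z hz => ?_)⟩
  rw [mem_ball] at hz ⊢
  have h1 := dist_triangle z x y
  rw [dist_comm x y] at h1
  linarith

lemma isOpen_probMeasure_closed_lt {F : Set X} (hF : IsClosed F) {t : ℝ≥0∞} (ht : t ≠ ⊤) :
    IsOpen {ν : ProbabilityMeasure X | ν.toMeasure F < t} := by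
  rw [isOpen_iff_forall_mem_open]
  intro μ₀ hμ₀
  simp only [mem_setOf_eq] at hμ₀
  have δpos : ∀ n : ℕ, 0 < (1 : ℝ) / (n + 1) := fun n => by positivity
  have key := tendsto_lintegral_thickenedIndicator_of_isClosed
    (μ₀.toMeasure) hF δpos tendsto_one_div_add_atTop_nhds_zero_nat
  obtain ⟨n, hn⟩ := (key.eventually_lt_const hμ₀).exists
  set g := thickenedIndicator (δpos n) F with hg
  refine ⟨(fun ν : ProbabilityMeasure X => ν.toFiniteMeasure.testAgainstNN g) ⁻¹'
      (Set.Iio t.toNNReal), ?_, ?_, ?_⟩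
  · intro ν hν
    simp only [mem_preimage, mem_Iio] at hν
    simp only [mem_setOf_eq]
    calc ν.toMeasure F ≤ ∫⁻ x, g x ∂ν.toMeasure :=
          measure_le_lintegral_thickenedIndicator _ hF.measurableSet (δpos n)
      _ = ∫⁻ x, g x ∂(ν.toFiniteMeasure : Measure X) := rfl
      _ = (ν.toFiniteMeasure.testAgainstNN g : ℝ≥0∞) :=
          FiniteMeasure.testAgainstNN_coe_eq.symm
      _ < t := by
          rw [← ENNReal.coe_toNNReal ht]
          exact_mod_cast hν
  · exact (ProbabilityMeasure.continuous_testAgainstNN_eval g).isOpen_preimage _ isOpen_Iio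
  · simp only [mem_preimage, mem_Iio]
    have h2 : (μ₀.toFiniteMeasure.testAgainstNN g : ℝ≥0∞) < t := by
      rw [FiniteMeasure.testAgainstNN_coe_eq]
      exact hn
    rwa [← ENNReal.coe_toNNReal ht, ENNReal.coe_lt_coe] at h2

lemma isOpen_probMeasure_lt_open {U : Set X} (hU : IsOpen U) {c : ℝ≥0∞} (hc : c < 1) :
    IsOpen {ν : ProbabilityMeasure X | c < ν.toMeasure U} := by
  have heq : {ν : ProbabilityMeasure X | c < ν.toMeasure U}
      = {ν : ProbabilityMeasure X | ν.toMeasure Uᶜ < 1 - c} := by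
    ext ν
    simp only [mem_setOf_eq]
    have h1 : ν.toMeasure Uᶜ + ν.toMeasure U = 1 := by
      rw [add_comm, measure_add_measure_compl hU.measurableSet, measure_univ]
    have h2 : ν.toMeasure Uᶜ < 1 - c ↔ c < ν.toMeasure U := by
      rw [lt_tsub_iff_right, ← h1, add_comm (ν.toMeasure Uᶜ) c,
        add_comm (ν.toMeasure Uᶜ) (ν.toMeasure U)]
      exact ENNReal.add_lt_add_iff_right (measure_ne_top _ _)
    exact h2.symm
  rw [heq]
  exact isOpen_probMeasure_closed_lt hU.isClosed_compl
    (ne_top_of_le_ne_top ENNReal.one_ne_top tsub_le_self)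

lemma aux_cover_finite [SecondCountableTopology X] {c : ℝ≥0∞}
    (μ₀ : ProbabilityMeasure X) {E : Set X} (hc : c < μ₀.toMeasure E)
    {η : X → ℝ} (hη : ∀ x ∈ E, 0 < η x) :
    ∃ (f : ℕ → X) (N : ℕ), (∀ i, f i ∈ E) ∧
      c < μ₀.toMeasure (⋃ i ≤ N, ball (f i) (η (f i))) := by
  have hcov : ∀ x ∈ E, ball x (η x) ∈ 𝓝[E] x := fun x hx =>
    mem_nhdsWithin_of_mem_nhds (ball_mem_nhds x (hη x hx))
  obtain ⟨t, htE, htc, htcov⟩ := TopologicalSpace.countable_cover_nhdsWithin hcov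
  have htne : t.Nonempty := by
    rcases t.eq_empty_or_nonempty with rfl | h
    · exfalso
      simp only [mem_empty_iff_false, iUnion_of_empty, iUnion_empty] at htcov
      have h0 : μ₀.toMeasure E = 0 :=
        le_antisymm ((measure_mono htcov).trans (by simp)) zero_le
      rw [h0] at hc
      exact (not_lt_of_ge zero_le) hc
    · exact h
  obtain ⟨f, hft⟩ := htc.exists_eq_range htne
  have hfE : ∀ i, f i ∈ E := fun i => htE (by rw [hft]; exact ⟨i, rfl⟩)
  have hcb : c < μ₀.toMeasure (⋃ i : ℕ, ball (f i) (η (f i))) := by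
    refine lt_of_lt_of_le hc (measure_mono (htcov.trans ?_))
    intro y hy
    rw [mem_iUnion₂] at hy
    obtain ⟨x, hxt, hyx⟩ := hy
    rw [hft] at hxt
    obtain ⟨i, rfl⟩ := hxt
    exact mem_iUnion.mpr ⟨i, hyx⟩
  have htend := tendsto_measure_iUnion_accumulate
    (μ := μ₀.toMeasure) (f := fun i => ball (f i) (η (f i)))
  obtain ⟨N, hN⟩ := (htend.eventually_const_lt hcb).exists
  refine ⟨f, N, hfE, ?_⟩
  rwa [Set.accumulate_def] at hN

lemma isOpen_measure_dimSetLt [SecondCountableTopology X]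
    {β δ : ℝ} (hβ : 0 < β) (hδ : 0 < δ) {c : ℝ≥0∞} (hc : c < 1) :
    IsOpen {ν : ProbabilityMeasure X | c < ν.toMeasure (dimSetLt ν.toMeasure β δ)} := by
  rw [isOpen_iff_forall_mem_open]
  intro μ₀ hμ₀
  simp only [mem_setOf_eq] at hμ₀
  have hdata : ∀ x ∈ dimSetLt μ₀.toMeasure β δ, ∃ a b : ℝ,
      (0 < a ∧ a < b ∧ b < δ) ∧
      μ₀.toMeasure (closedBall x b) < ENNReal.ofReal (a ^ β) := by
    rintro x ⟨ε, hε0, hεδ, hx⟩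
    have hm : (μ₀.toMeasure (ball x ε)).toReal < ε ^ β :=
      (ENNReal.lt_ofReal_iff_toReal_lt (measure_ne_top _ _)).mp hx
    obtain ⟨a, ha0, haε, hma⟩ := exists_smaller_radius hε0 hm
    refine ⟨a, (a + ε) / 2, ⟨ha0, by linarith, by linarith⟩, ?_⟩
    calc μ₀.toMeasure (closedBall x ((a + ε) / 2))
        ≤ μ₀.toMeasure (ball x ε) := measure_mono (closedBall_subset_ball (by linarith))
      _ < ENNReal.ofReal (a ^ β) :=
        (ENNReal.lt_ofReal_iff_toReal_lt (measure_ne_top _ _)).mpr hma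
  choose! a b hab hcb using hdata
  have hkey : ∀ x ∈ dimSetLt μ₀.toMeasure β δ, ∀ ν : ProbabilityMeasure X,
      ν.toMeasure (closedBall x (b x)) < ENNReal.ofReal ((a x) ^ β) →
      ∀ y ∈ ball x (b x - a x), y ∈ dimSetLt ν.toMeasure β δ := by
    intro x hx ν hν y hy
    obtain ⟨ha0, hab', hbδ⟩ := hab x hx
    refine ⟨a x, ha0, hab'.trans hbδ, lt_of_le_of_lt (measure_mono fun z hz => ?_) hν⟩
    rw [mem_ball] at hz hy
    rw [mem_closedBall]
    have := dist_triangle z y x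
    linarith
  obtain ⟨f, N, hfE, hU⟩ := aux_cover_finite μ₀ hμ₀ (η := fun x => b x - a x)
    (fun x hx => by have h := hab x hx; show (0:ℝ) < b x - a x; linarith [h.1, h.2.1])
  refine ⟨{ν : ProbabilityMeasure X | c < ν.toMeasure (⋃ i ≤ N, ball (f i) (b (f i) - a (f i)))} ∩
      ⋂ i ∈ Set.Iic N, {ν : ProbabilityMeasure X |
        ν.toMeasure (closedBall (f i) (b (f i))) < ENNReal.ofReal ((a (f i)) ^ β)},
      ?_, ?_, ?_⟩
  · rintro ν ⟨hν1, hν2⟩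
    simp only [mem_iInter, mem_setOf_eq] at hν2
    simp only [mem_setOf_eq] at hν1 ⊢
    refine lt_of_lt_of_le hν1 (measure_mono ?_)
    intro y hy
    simp only [mem_iUnion] at hy
    obtain ⟨i, hiN, hyi⟩ := hy
    exact hkey (f i) (hfE i) ν (hν2 i hiN) y hyi
  · refine IsOpen.inter ?_ ?_
    · exact isOpen_probMeasure_lt_open (isOpen_biUnion fun i _ => isOpen_ball) hc
    · exact (Set.finite_Iic N).isOpen_biInter fun i _ =>
        isOpen_probMeasure_closed_lt isClosed_closedBall ENNReal.ofReal_ne_top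
  · refine ⟨hU, ?_⟩
    simp only [mem_iInter, mem_setOf_eq]
    intro i _
    exact hcb (f i) (hfE i)

lemma isOpen_measure_dimSetGt [SecondCountableTopology X]
    {γ δ : ℝ} (hγ : 0 < γ) (hδ0 : 0 < δ) (hδ1 : δ ≤ 1) {c : ℝ≥0∞} (hc : c < 1) :
    IsOpen {ν : ProbabilityMeasure X | c < ν.toMeasure (dimSetGt ν.toMeasure γ δ)} := by
  rw [isOpen_iff_forall_mem_open]
  intro μ₀ hμ₀
  simp only [mem_setOf_eq] at hμ₀
  have hdata : ∀ x ∈ dimSetGt μ₀.toMeasure γ δ, ∃ a e : ℝ,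
      (0 < a ∧ a < e ∧ e < δ) ∧
      ENNReal.ofReal (e ^ γ) < μ₀.toMeasure (ball x a) := by
    rintro x ⟨ε, hε0, hεδ, hx⟩
    have hm : ε ^ γ < (μ₀.toMeasure (ball x ε)).toReal :=
      (ENNReal.ofReal_lt_iff_lt_toReal (Real.rpow_pos_of_pos hε0 γ).le
        (measure_ne_top _ _)).mp hx
    obtain ⟨e, hεe, heδ, hme⟩ := exists_larger_radius hε0 hεδ hm
    exact ⟨ε, e, ⟨hε0, hεe, heδ⟩,
      (ENNReal.ofReal_lt_iff_lt_toReal (Real.rpow_pos_of_pos (hε0.trans hεe) γ).le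
        (measure_ne_top _ _)).mpr hme⟩
  choose! a e hae hball using hdata
  have hkey : ∀ x ∈ dimSetGt μ₀.toMeasure γ δ, ∀ ν : ProbabilityMeasure X,
      ENNReal.ofReal ((e x) ^ γ) < ν.toMeasure (ball x (a x)) →
      ∀ y ∈ ball x (e x - a x), y ∈ dimSetGt ν.toMeasure γ δ := by
    intro x hx ν hν y hy
    obtain ⟨ha0, hae', heδ⟩ := hae x hx
    refine ⟨e x, ha0.trans hae', heδ, lt_of_lt_of_le hν (measure_mono fun z hz => ?_)⟩
    rw [mem_ball] at hz hy ⊢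
    have h1 := dist_triangle z x y
    rw [dist_comm x y] at h1
    linarith
  obtain ⟨f, N, hfE, hU⟩ := aux_cover_finite μ₀ hμ₀ (η := fun x => e x - a x)
    (fun x hx => by have h := hae x hx; show (0:ℝ) < e x - a x; linarith [h.1, h.2.1])
  refine ⟨{ν : ProbabilityMeasure X | c < ν.toMeasure (⋃ i ≤ N, ball (f i) (e (f i) - a (f i)))} ∩
      ⋂ i ∈ Set.Iic N, {ν : ProbabilityMeasure X |
        ENNReal.ofReal ((e (f i)) ^ γ) < ν.toMeasure (ball (f i) (a (f i)))},
      ?_, ?_, ?_⟩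
  · rintro ν ⟨hν1, hν2⟩
    simp only [mem_iInter, mem_setOf_eq] at hν2
    simp only [mem_setOf_eq] at hν1 ⊢
    refine lt_of_lt_of_le hν1 (measure_mono ?_)
    intro y hy
    simp only [mem_iUnion] at hy
    obtain ⟨i, hiN, hyi⟩ := hy
    exact hkey (f i) (hfE i) ν (hν2 i hiN) y hyi
  · refine IsOpen.inter ?_ ?_
    · exact isOpen_probMeasure_lt_open (isOpen_biUnion fun i _ => isOpen_ball) hc
    · refine (Set.finite_Iic N).isOpen_biInter fun i hi => ?_
      refine isOpen_probMeasure_lt_open isOpen_ball ?_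
      rw [ENNReal.ofReal_lt_one]
      have h := hae (f i) (hfE i)
      exact Real.rpow_lt_one (by linarith [h.1, h.2.1]) (by linarith [h.2.2]) hγ
  · refine ⟨hU, ?_⟩
    simp only [mem_iInter, mem_setOf_eq]
    intro i _
    exact hball (f i) (hfE i)

lemma one_div_nat_succ_le_one (j : ℕ) : (1 : ℝ) / (j + 1) ≤ 1 := by
  rw [div_le_one (by positivity)]
  have := Nat.cast_nonneg (α := ℝ) j
  linarith

lemma mem_upper_char {α : ℝ} (hα : 0 < α) (μ : Measure X) [IsProbabilityMeasure μ] (x : X) :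
    ENNReal.ofReal α ≤ upperLocalDim dist μ x ↔
      ∀ q : ℚ, 0 < (q : ℝ) → (q : ℝ) < α → ∀ j : ℕ,
        x ∈ dimSetLt μ ((q : ℝ)) (1 / (j + 1)) := by
  have hball : ∀ ε : ℝ, {y | dist x y < ε} = ball x ε := fun ε => by
    ext y; simp [mem_ball, dist_comm]
  rw [upperLocalDim]
  by_cases hnull : ∃ ε > 0, μ {y | dist x y < ε} = 0
  · rw [if_pos hnull]
    simp only [hball] at hnull
    simp only [le_top, true_iff]
    obtain ⟨ε₀, hε₀, h0⟩ := hnull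
    intro q hq0 hqα j
    have hd : (0:ℝ) < 1 / (j + 1) := by positivity
    have h1 := min_le_right ε₀ ((1:ℝ) / (j + 1))
    have h2 := min_le_left ε₀ ((1:ℝ) / (j + 1))
    have hmin : (0:ℝ) < min ε₀ (1 / (j + 1)) := lt_min hε₀ hd
    refine ⟨min ε₀ (1 / (j + 1)) / 2, by positivity, by linarith, ?_⟩
    have hsub : ball x (min ε₀ (1 / (j + 1)) / 2) ⊆ ball x ε₀ :=
      ball_subset_ball (by linarith)
    have hz : μ (ball x (min ε₀ (1 / (j + 1)) / 2)) = 0 :=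
      le_antisymm (h0 ▸ measure_mono hsub) zero_le
    rw [hz]
    exact ENNReal.ofReal_pos.mpr (Real.rpow_pos_of_pos (by positivity) _)
  · rw [if_neg hnull]
    simp only [hball] at hnull ⊢
    push_neg at hnull
    constructor
    · intro h q hq0 hqα j
      have hlt : ENNReal.ofReal (q : ℝ) < limsup (fun ε : ℝ =>
          ENNReal.ofReal (Real.log (μ (ball x ε)).toReal / Real.log ε)) (𝓝[>] (0 : ℝ)) :=
        lt_of_lt_of_le ((ENNReal.ofReal_lt_ofReal_iff hα).mpr hqα) h
      have hfreq := frequently_lt_of_lt_limsup (by isBoundedDefault) hlt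
      have hmem : ∀ᶠ ε in 𝓝[>] (0 : ℝ), ε ∈ Set.Ioo (0 : ℝ) (1 / (j + 1)) :=
        Ioo_mem_nhdsGT_of_mem ⟨le_refl 0, by positivity⟩
      obtain ⟨ε, hq', hε0, hεj⟩ := (hfreq.and_eventually hmem).exists
      refine ⟨ε, hε0, hεj, ?_⟩
      have hε1 : ε < 1 := hεj.trans_le (one_div_nat_succ_le_one j)
      have hm0 : 0 < (μ (ball x ε)).toReal :=
        ENNReal.toReal_pos (hnull ε hε0) (measure_ne_top μ _)
      have hlog : Real.log ε < 0 := Real.log_neg hε0 hε1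
      have hq2 : (q : ℝ) < Real.log (μ (ball x ε)).toReal / Real.log ε :=
        (ENNReal.ofReal_lt_ofReal_iff_of_nonneg hq0.le).mp hq'
      rw [lt_div_iff_of_neg hlog, ← Real.log_rpow hε0] at hq2
      exact (ENNReal.lt_ofReal_iff_toReal_lt (measure_ne_top μ _)).mpr
        ((Real.log_lt_log_iff hm0 (Real.rpow_pos_of_pos hε0 _)).mp hq2)
    · intro h
      refine le_of_forall_lt fun w hw => ?_
      have hwtop : w ≠ ⊤ := (hw.trans ENNReal.ofReal_lt_top).ne
      have hwα : w.toReal < α := (ENNReal.lt_ofReal_iff_toReal_lt hwtop).mp hw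
      obtain ⟨q, hq1, hq2⟩ := exists_rat_btwn (max_lt hwα hα : max w.toReal 0 < α)
      have hq0 : 0 < (q : ℝ) := lt_of_le_of_lt (le_max_right _ _) hq1
      have hwq : w < ENNReal.ofReal (q : ℝ) :=
        (ENNReal.lt_ofReal_iff_toReal_lt hwtop).mpr (lt_of_le_of_lt (le_max_left _ _) hq1)
      refine hwq.trans_le (le_limsup_of_frequently_le' ?_)
      rw [Filter.frequently_iff]
      intro s hs
      obtain ⟨u, hu, hsub⟩ := mem_nhdsGT_iff_exists_Ioo_subset.mp hs
      obtain ⟨j, hj⟩ := exists_nat_one_div_lt (show (0:ℝ) < u from hu)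
      obtain ⟨ε, hε0, hεj, hx⟩ := h q hq0 hq2 j
      refine ⟨ε, hsub ⟨hε0, hεj.trans hj⟩, ?_⟩
      have hε1 : ε < 1 := hεj.trans_le (one_div_nat_succ_le_one j)
      have hm0 : 0 < (μ (ball x ε)).toReal :=
        ENNReal.toReal_pos (hnull ε hε0) (measure_ne_top μ _)
      have hlog : Real.log ε < 0 := Real.log_neg hε0 hε1
      have hm : (μ (ball x ε)).toReal < ε ^ (q : ℝ) :=
        (ENNReal.lt_ofReal_iff_toReal_lt (measure_ne_top μ _)).mp hx
      have hq3 : (q : ℝ) < Real.log (μ (ball x ε)).toReal / Real.log ε := by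
        rw [lt_div_iff_of_neg hlog, ← Real.log_rpow hε0]
        exact Real.log_lt_log hm0 hm
      exact ENNReal.ofReal_le_ofReal hq3.le

lemma mem_lower_char (μ : Measure X) [IsProbabilityMeasure μ] (x : X) :
    lowerLocalDim dist μ x = 0 ↔
      ∀ k j : ℕ, x ∈ dimSetGt μ (1 / (k + 1)) (1 / (j + 1)) := by
  have hball : ∀ ε : ℝ, {y | dist x y < ε} = ball x ε := fun ε => by
    ext y; simp [mem_ball, dist_comm]
  rw [lowerLocalDim]
  by_cases hnull : ∃ ε > 0, μ {y | dist x y < ε} = 0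
  · rw [if_pos hnull]
    simp only [hball] at hnull
    simp only [ENNReal.top_ne_zero, false_iff]
    obtain ⟨ε₀, hε₀, h0⟩ := hnull
    intro hcon
    obtain ⟨j, hj⟩ := exists_nat_one_div_lt hε₀
    obtain ⟨ε, hε0, hεj, hx⟩ := hcon 0 j
    have hle : μ (ball x ε) ≤ 0 := h0 ▸ measure_mono (ball_subset_ball (hεj.trans hj).le)
    exact (lt_of_lt_of_le hx hle).not_ge zero_le
  · rw [if_neg hnull]
    simp only [hball] at hnull ⊢
    push_neg at hnull
    constructor
    · intro h k j
      have hlt : liminf (fun ε : ℝ =>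
          ENNReal.ofReal (Real.log (μ (ball x ε)).toReal / Real.log ε)) (𝓝[>] (0 : ℝ))
          < ENNReal.ofReal (1 / (k + 1)) := by
        rw [h]
        exact ENNReal.ofReal_pos.mpr (by positivity)
      have hfreq := frequently_lt_of_liminf_lt (by isBoundedDefault) hlt
      have hmem : ∀ᶠ ε in 𝓝[>] (0 : ℝ), ε ∈ Set.Ioo (0 : ℝ) (1 / (j + 1)) :=
        Ioo_mem_nhdsGT_of_mem ⟨le_refl 0, by positivity⟩
      obtain ⟨ε, hq', hε0, hεj⟩ := (hfreq.and_eventually hmem).exists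
      refine ⟨ε, hε0, hεj, ?_⟩
      have hε1 : ε < 1 := hεj.trans_le (one_div_nat_succ_le_one j)
      have hm0 : 0 < (μ (ball x ε)).toReal :=
        ENNReal.toReal_pos (hnull ε hε0) (measure_ne_top μ _)
      have hlog : Real.log ε < 0 := Real.log_neg hε0 hε1
      have h2 : Real.log (μ (ball x ε)).toReal / Real.log ε < 1 / (k + 1) :=
        (ENNReal.ofReal_lt_ofReal_iff (by positivity)).mp hq'
      rw [div_lt_iff_of_neg hlog, ← Real.log_rpow hε0] at h2
      exact (ENNReal.ofReal_lt_iff_lt_toReal (Real.rpow_pos_of_pos hε0 _).le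
        (measure_ne_top μ _)).mpr ((Real.log_lt_log_iff (Real.rpow_pos_of_pos hε0 _) hm0).mp h2)
    · intro h
      refine le_antisymm ?_ zero_le
      by_contra hpos
      have hne : liminf (fun ε : ℝ =>
          ENNReal.ofReal (Real.log (μ (ball x ε)).toReal / Real.log ε)) (𝓝[>] (0 : ℝ)) ≠ 0 :=
        fun hh => hpos (le_of_eq hh)
      obtain ⟨n, hn⟩ := ENNReal.exists_inv_nat_lt hne
      have hfr : ∃ᶠ ε in 𝓝[>] (0 : ℝ),
          ENNReal.ofReal (Real.log (μ (ball x ε)).toReal / Real.log ε)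
            ≤ ENNReal.ofReal (1 / (n + 1)) := by
        rw [Filter.frequently_iff]
        intro s hs
        obtain ⟨u, hu, hsub⟩ := mem_nhdsGT_iff_exists_Ioo_subset.mp hs
        obtain ⟨j, hj⟩ := exists_nat_one_div_lt (show (0:ℝ) < u from hu)
        obtain ⟨ε, hε0, hεj, hx⟩ := h n j
        refine ⟨ε, hsub ⟨hε0, hεj.trans hj⟩, ?_⟩
        have hε1 : ε < 1 := hεj.trans_le (one_div_nat_succ_le_one j)
        have hm0 : 0 < (μ (ball x ε)).toReal :=
          ENNReal.toReal_pos (hnull ε hε0) (measure_ne_top μ _)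
        have hlog : Real.log ε < 0 := Real.log_neg hε0 hε1
        have hm : ε ^ ((1 : ℝ) / (n + 1)) < (μ (ball x ε)).toReal :=
          (ENNReal.ofReal_lt_iff_lt_toReal (Real.rpow_pos_of_pos hε0 _).le
            (measure_ne_top μ _)).mp hx
        have h3 : Real.log (μ (ball x ε)).toReal / Real.log ε < 1 / (n + 1) := by
          rw [div_lt_iff_of_neg hlog, ← Real.log_rpow hε0]
          exact Real.log_lt_log (Real.rpow_pos_of_pos hε0 _) hm
        exact ENNReal.ofReal_le_ofReal h3.le
      have hle := Filter.liminf_le_of_frequently_le' hfr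
      have hcast : ENNReal.ofReal (1 / ((n : ℝ) + 1)) ≤ ((n : ℝ≥0∞))⁻¹ := by
        rw [one_div, ENNReal.ofReal_inv_of_pos (by positivity)]
        refine ENNReal.inv_le_inv.mpr ?_
        calc (n : ℝ≥0∞) = ENNReal.ofReal (n : ℝ) := (ENNReal.ofReal_natCast n).symm
          _ ≤ ENNReal.ofReal ((n : ℝ) + 1) := ENNReal.ofReal_le_ofReal (by linarith)
      exact absurd hn (not_lt.mpr (hle.trans hcast))

lemma ae_one_iff (ν : ProbabilityMeasure X) {E : Set X} (hE : MeasurableSet E) :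
    (∀ᵐ x ∂ν.toMeasure, x ∈ E) ↔
      ∀ m : ℕ, 1 - ((m : ℝ≥0∞) + 1)⁻¹ < ν.toMeasure E := by
  rw [MeasureTheory.ae_iff]
  have hc : {x | ¬ x ∈ E} = Eᶜ := rfl
  rw [hc, prob_compl_eq_one_sub hE, tsub_eq_zero_iff_le]
  constructor
  · intro h m
    have h1 : ν.toMeasure E = 1 := le_antisymm prob_le_one h
    rw [h1]
    exact ENNReal.sub_lt_self ENNReal.one_ne_top one_ne_zero
      (ENNReal.inv_ne_zero.mpr (by simp))
  · intro h
    by_contra hne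
    have hlt : ν.toMeasure E < 1 := lt_of_not_ge hne
    obtain ⟨n, hn⟩ := ENNReal.exists_inv_nat_lt (tsub_pos_of_lt hlt).ne'
    have h2 : ((n : ℝ≥0∞) + 1)⁻¹ < 1 - ν.toMeasure E :=
      lt_of_le_of_lt (ENNReal.inv_le_inv.mpr le_self_add) hn
    rw [lt_tsub_iff_right] at h2
    exact (h n).not_ge (ENNReal.le_sub_of_add_le_left (by simp) h2.le)

end GdeltaAux


/-- Let `X` be a Polish metric space and `M(X)` the space of Borel
probability measures with the weak topology. For every `α > 0`, the set of `μ` with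
`d̄_μ(x) ≥ α` for `μ`-a.e. `x` (i.e. `dim_P^-(μ) ≥ α`) is a `Gδ` subset of `M(X)`, and the
set of `μ` with `d̲_μ(x) = 0` for `μ`-a.e. `x` (i.e. `dim_H(μ) = 0`) is a `Gδ` subset of
`M(X)`. -/
theorem localDim_measure_sets_Gδ {X : Type*} [MetricSpace X] [CompleteSpace X]
    [TopologicalSpace.SeparableSpace X] [MeasurableSpace X] [BorelSpace X]
    (α : ℝ) (hα : 0 < α) :
    IsGδ {μ : ProbabilityMeasure X |
        ∀ᵐ x ∂μ.toMeasure, ENNReal.ofReal α ≤ upperLocalDim dist μ.toMeasure x} ∧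
    IsGδ {μ : ProbabilityMeasure X |
        ∀ᵐ x ∂μ.toMeasure, lowerLocalDim dist μ.toMeasure x = 0} := by
  haveI : SecondCountableTopology X := UniformSpace.secondCountable_of_separable X
  constructor
  · have hset : {μ : ProbabilityMeasure X |
        ∀ᵐ x ∂μ.toMeasure, ENNReal.ofReal α ≤ upperLocalDim dist μ.toMeasure x}
        = ⋂ (q : {q : ℚ // 0 < (q : ℝ) ∧ (q : ℝ) < α}) (j : ℕ) (m : ℕ),
          {μ : ProbabilityMeasure X | 1 - ((m : ℝ≥0∞) + 1)⁻¹
            < μ.toMeasure (dimSetLt μ.toMeasure (((q : ℚ) : ℝ)) (1 / (j + 1)))} := by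
      ext ν
      simp only [mem_setOf_eq, mem_iInter]
      constructor
      · intro hae q j m
        refine (ae_one_iff ν (isOpen_dimSetLt ν.toMeasure _ _).measurableSet).mp ?_ m
        filter_upwards [hae] with x hx
        exact (mem_upper_char hα ν.toMeasure x).mp hx q q.2.1 q.2.2 j
      · intro hh
        have hae : ∀ᵐ x ∂ν.toMeasure, ∀ (q : {q : ℚ // 0 < (q : ℝ) ∧ (q : ℝ) < α}) (j : ℕ),
            x ∈ dimSetLt ν.toMeasure (((q : ℚ) : ℝ)) (1 / (j + 1)) := by
          rw [MeasureTheory.ae_all_iff]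
          intro q
          rw [MeasureTheory.ae_all_iff]
          intro j
          exact (ae_one_iff ν (isOpen_dimSetLt ν.toMeasure _ _).measurableSet).mpr
            fun m => hh q j m
        filter_upwards [hae] with x hx
        exact (mem_upper_char hα ν.toMeasure x).mpr fun q hq0 hqα j => hx ⟨q, hq0, hqα⟩ j
    rw [hset]
    refine IsGδ.iInter fun q => IsGδ.iInter fun j => IsGδ.iInter fun m => ?_
    have hc : (1 : ℝ≥0∞) - ((m : ℝ≥0∞) + 1)⁻¹ < 1 :=
      ENNReal.sub_lt_self ENNReal.one_ne_top one_ne_zero (ENNReal.inv_ne_zero.mpr (by simp))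
    exact (isOpen_measure_dimSetLt q.2.1 (by positivity) hc).isGδ
  · have hset : {μ : ProbabilityMeasure X |
        ∀ᵐ x ∂μ.toMeasure, lowerLocalDim dist μ.toMeasure x = 0}
        = ⋂ (k : ℕ) (j : ℕ) (m : ℕ),
          {μ : ProbabilityMeasure X | 1 - ((m : ℝ≥0∞) + 1)⁻¹
            < μ.toMeasure (dimSetGt μ.toMeasure (1 / (k + 1)) (1 / (j + 1)))} := by
      ext ν
      simp only [mem_setOf_eq, mem_iInter]
      constructor
      · intro hae k j m
        refine (ae_one_iff ν (isOpen_dimSetGt ν.toMeasure _ _).measurableSet).mp ?_ m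
        filter_upwards [hae] with x hx
        exact (mem_lower_char ν.toMeasure x).mp hx k j
      · intro hh
        have hae : ∀ᵐ x ∂ν.toMeasure, ∀ (k : ℕ) (j : ℕ),
            x ∈ dimSetGt ν.toMeasure (1 / (k + 1)) (1 / (j + 1)) := by
          rw [MeasureTheory.ae_all_iff]
          intro k
          rw [MeasureTheory.ae_all_iff]
          intro j
          exact (ae_one_iff ν (isOpen_dimSetGt ν.toMeasure _ _).measurableSet).mpr
            fun m => hh k j m
        filter_upwards [hae] with x hx
        exact (mem_lower_char ν.toMeasure x).mpr hx
    rw [hset]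
    refine IsGδ.iInter fun k => IsGδ.iInter fun j => IsGδ.iInter fun m => ?_
    have hc : (1 : ℝ≥0∞) - ((m : ℝ≥0∞) + 1)⁻¹ < 1 :=
      ENNReal.sub_lt_self ENNReal.one_ne_top one_ne_zero (ENNReal.inv_ne_zero.mpr (by simp))
    exact (isOpen_measure_dimSetGt (by positivity) (by positivity)
      (one_div_nat_succ_le_one j) hc).isGδ
end

section
/- Let X be a Polish metric space, let T : X → X be a continuous map, and let M(T) be the space of T-invariant Borel probability measures with the weak topology. For every α > 0, the set {μ ∈ M(T) : R̄(x) ≥ α for μ-a.e. x ∈ X} is a Gδ subset of M(T), and the set {μ ∈ M(T) : R̲(x) = 0 for μ-a.e. x ∈ X} is a Gδ subset of M(T). -/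
open Filter MeasureTheory Topology Metric Set
open scoped ENNReal NNReal

noncomputable section
attribute [local instance] Classical.propDecidable

end


section Aux

open Filter MeasureTheory Topology Set

variable {X : Type*} [MetricSpace X]

/-- Characterization of `ofReal q < recRatio dist T x r` as an open condition. -/
lemma charE (T : X → X) (x : X) {r q : ℝ} (hr0 : 0 < r) (hr1 : r < 1) (hq : 0 < q) :
    ENNReal.ofReal q < recRatio dist T x r ↔
      ∀ n : ℕ, 1 ≤ n → (n : ℝ) ≤ r ^ (-q) → r < dist (T^[n] x) x := by
  have hlog : 0 < -Real.log r := by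
    have := Real.log_neg hr0 hr1; linarith
  by_cases h : ∃ n : ℕ, 1 ≤ n ∧ dist (T^[n] x) x ≤ r
  · rw [recRatio, if_pos h]
    have hne : {n : ℕ | 1 ≤ n ∧ dist (T^[n] x) x ≤ r}.Nonempty := h
    have hmem := Nat.sInf_mem hne
    set τ : ℕ := sInf {n : ℕ | 1 ≤ n ∧ dist (T^[n] x) x ≤ r} with hτdef
    have hτ1 : 1 ≤ τ := hmem.1
    have hτpos : (0:ℝ) < (τ : ℝ) := by exact_mod_cast hτ1
    rw [ENNReal.ofReal_lt_ofReal_iff_of_nonneg hq.le, lt_div_iff₀ hlog]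
    have hrw : q * -Real.log r = Real.log (r ^ (-q)) := by
      rw [Real.log_rpow hr0]; ring
    rw [hrw, Real.log_lt_log_iff (Real.rpow_pos_of_pos hr0 _) hτpos]
    constructor
    · intro hlt n hn1 hnle
      by_contra hle
      push_neg at hle
      have hnS : n ∈ {n : ℕ | 1 ≤ n ∧ dist (T^[n] x) x ≤ r} := ⟨hn1, hle⟩
      have hτn : τ ≤ n := Nat.sInf_le hnS
      have : (τ : ℝ) ≤ (n : ℝ) := by exact_mod_cast hτn
      linarith
    · intro H
      by_contra hle
      push_neg at hle
      exact absurd hmem.2 (not_le.mpr (H τ hτ1 hle))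
  · rw [recRatio, if_neg h]
    push_neg at h
    exact iff_of_true (ENNReal.ofReal_lt_top) fun n hn _ => h n hn

/-- Characterization of `recRatio dist T x r < ofReal q`. -/
lemma charF (T : X → X) (x : X) {r q : ℝ} (hr0 : 0 < r) (hr1 : r < 1) (hq : 0 < q) :
    recRatio dist T x r < ENNReal.ofReal q ↔
      ∃ n : ℕ, 1 ≤ n ∧ (n : ℝ) < r ^ (-q) ∧ dist (T^[n] x) x ≤ r := by
  have hlog : 0 < -Real.log r := by
    have := Real.log_neg hr0 hr1; linarith
  by_cases h : ∃ n : ℕ, 1 ≤ n ∧ dist (T^[n] x) x ≤ r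
  · rw [recRatio, if_pos h]
    have hne : {n : ℕ | 1 ≤ n ∧ dist (T^[n] x) x ≤ r}.Nonempty := h
    have hmem := Nat.sInf_mem hne
    set τ : ℕ := sInf {n : ℕ | 1 ≤ n ∧ dist (T^[n] x) x ≤ r} with hτdef
    have hτ1 : 1 ≤ τ := hmem.1
    have hτpos : (0:ℝ) < (τ : ℝ) := by exact_mod_cast hτ1
    rw [ENNReal.ofReal_lt_ofReal_iff hq, div_lt_iff₀ hlog]
    have hrw : q * -Real.log r = Real.log (r ^ (-q)) := by
      rw [Real.log_rpow hr0]; ring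
    rw [hrw, Real.log_lt_log_iff hτpos (Real.rpow_pos_of_pos hr0 _)]
    constructor
    · intro hlt
      exact ⟨τ, hτ1, hlt, hmem.2⟩
    · rintro ⟨n, hn1, hn2, hn3⟩
      have hτn : τ ≤ n := Nat.sInf_le ⟨hn1, hn3⟩
      have : (τ : ℝ) ≤ (n : ℝ) := by exact_mod_cast hτn
      linarith
  · rw [recRatio, if_neg h]
    push_neg at h
    refine iff_of_false (not_top_lt) ?_
    rintro ⟨n, hn1, _, hn3⟩
    exact absurd hn3 (not_le.mpr (h n hn1))

lemma isOpen_Eset (T : X → X) (hT : Continuous T) (r s : ℝ) :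
    IsOpen {x : X | ∀ n : ℕ, 1 ≤ n → (n : ℝ) ≤ s → r < dist (T^[n] x) x} := by
  have hrw : {x : X | ∀ n : ℕ, 1 ≤ n → (n : ℝ) ≤ s → r < dist (T^[n] x) x}
      = ⋂ n ∈ Finset.Icc 1 ⌊s⌋₊, {x : X | r < dist (T^[n] x) x} := by
    ext x
    simp only [mem_setOf_eq, Set.mem_iInter, Finset.mem_Icc]
    constructor
    · rintro h n ⟨h1, h2⟩
      have hfl : 0 < ⌊s⌋₊ := lt_of_lt_of_le h1 h2
      have hs0 : (1:ℝ) ≤ s := (Nat.one_le_floor_iff s).mp hfl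
      have : (n:ℝ) ≤ (⌊s⌋₊ : ℝ) := by exact_mod_cast h2
      exact h n h1 (this.trans (Nat.floor_le (by linarith)))
    · intro h n h1 h2
      exact h n ⟨h1, Nat.le_floor h2⟩
  rw [hrw]
  exact isOpen_biInter_finset fun n _ =>
    isOpen_lt continuous_const ((hT.iterate n).dist continuous_id)

lemma isOpen_Fset (T : X → X) (hT : Continuous T) (r s : ℝ) :
    IsOpen {x : X | ∃ n : ℕ, 1 ≤ n ∧ (n : ℝ) < s ∧ dist (T^[n] x) x < r} := by
  have hrw : {x : X | ∃ n : ℕ, 1 ≤ n ∧ (n : ℝ) < s ∧ dist (T^[n] x) x < r}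
      = ⋃ (n : ℕ) (_ : 1 ≤ n ∧ (n : ℝ) < s), {x : X | dist (T^[n] x) x < r} := by
    ext x
    simp only [mem_setOf_eq, Set.mem_iUnion]
    constructor
    · rintro ⟨n, h1, h2, h3⟩; exact ⟨n, ⟨h1, h2⟩, h3⟩
    · rintro ⟨n, ⟨h1, h2⟩, h3⟩; exact ⟨n, h1, h2, h3⟩
  rw [hrw]
  exact isOpen_iUnion fun n => isOpen_iUnion fun _ =>
    isOpen_lt ((hT.iterate n).dist continuous_id) continuous_const

lemma freq_nhdsGT_iff {P : ℝ → Prop} :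
    (∃ᶠ r in 𝓝[>] (0:ℝ), P r) ↔ ∀ ε > (0:ℝ), ∃ r, 0 < r ∧ r < ε ∧ P r := by
  constructor
  · intro h ε hε
    rcases Filter.frequently_iff.mp h (Ioo_mem_nhdsGT_of_mem ⟨le_refl 0, hε⟩) with ⟨r, hr, hPr⟩
    exact ⟨r, hr.1, hr.2, hPr⟩
  · intro h
    rw [Filter.frequently_iff]
    intro U hU
    rcases mem_nhdsGT_iff_exists_Ioo_subset.mp hU with ⟨ε, hε, hsub⟩
    rcases h ε hε with ⟨r, h1, h2, h3⟩
    exact ⟨r, hsub ⟨h1, h2⟩, h3⟩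

lemma exists_small_k (ε : ℝ) (hε : 0 < ε) : ∃ k : ℕ, min (1/((k:ℝ)+1)) 1 ≤ ε := by
  obtain ⟨k, hk⟩ := exists_nat_gt (1/ε)
  refine ⟨k, (min_le_left _ _).trans ?_⟩
  rw [div_le_iff₀ (by positivity)]
  rw [div_lt_iff₀ hε] at hk
  nlinarith

lemma pointwiseA (T : X → X) {α : ℝ} (hα : 0 < α) (x : X) :
    ENNReal.ofReal α ≤ upperRecRate dist T x ↔
      ∀ j k : ℕ, ∃ r ∈ Ioo (0:ℝ) (min (1/((k:ℝ)+1)) 1),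
        ∀ n : ℕ, 1 ≤ n → (n : ℝ) ≤ r ^ (-(α - α/((j:ℝ)+2))) → r < dist (T^[n] x) x := by
  have hq0 : ∀ j : ℕ, 0 < α - α/((j:ℝ)+2) := by
    intro j
    have hj2 : (1:ℝ) < (j:ℝ)+2 := by
      have : (0:ℝ) ≤ (j:ℝ) := Nat.cast_nonneg j
      linarith
    have : α/((j:ℝ)+2) < α := div_lt_self hα hj2
    linarith
  rw [upperRecRate, le_limsup_iff]
  constructor
  · intro h j k
    have hqα : α - α/((j:ℝ)+2) < α := by
      have : 0 < α/((j:ℝ)+2) := by positivity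
      linarith
    have hfr := h (ENNReal.ofReal (α - α/((j:ℝ)+2)))
      ((ENNReal.ofReal_lt_ofReal_iff hα).mpr hqα)
    have hIoo : Ioo (0:ℝ) (min (1/((k:ℝ)+1)) 1) ∈ 𝓝[>] (0:ℝ) :=
      Ioo_mem_nhdsGT_of_mem ⟨le_refl 0, lt_min (by positivity) one_pos⟩
    obtain ⟨r, hr, hPr⟩ := Filter.frequently_iff.mp hfr hIoo
    have hr1 : r < 1 := lt_of_lt_of_le hr.2 (min_le_right _ _)
    exact ⟨r, hr, (charE T x hr.1 hr1 (hq0 j)).mp hPr⟩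
  · intro h y hy
    have hytop : y ≠ ⊤ := ne_top_of_lt hy
    have hyt : y.toReal < α := (ENNReal.lt_ofReal_iff_toReal_lt hytop).mp hy
    obtain ⟨j, hj⟩ : ∃ j : ℕ, y.toReal < α - α/((j:ℝ)+2) := by
      obtain ⟨j, hj⟩ := exists_nat_gt (α/(α - y.toReal))
      have h1 : 0 < α - y.toReal := by linarith
      refine ⟨j, ?_⟩
      have h2 : α / ((j:ℝ)+2) < α - y.toReal := by
        rw [div_lt_iff₀ (by positivity)]
        rw [div_lt_iff₀ h1] at hj
        nlinarith
      linarith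
    rw [Filter.frequently_iff]
    intro U hU
    rcases mem_nhdsGT_iff_exists_Ioo_subset.mp hU with ⟨ε, hε, hsub⟩
    obtain ⟨k, hk⟩ := exists_small_k ε hε
    obtain ⟨r, hr, hE⟩ := h j k
    have hr1 : r < 1 := lt_of_lt_of_le hr.2 (min_le_right _ _)
    refine ⟨r, hsub ⟨hr.1, lt_of_lt_of_le hr.2 hk⟩, ?_⟩
    have hlt := (charE T x hr.1 hr1 (hq0 j)).mpr hE
    refine lt_trans ?_ hlt
    calc y = ENNReal.ofReal y.toReal := (ENNReal.ofReal_toReal hytop).symm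
    _ < ENNReal.ofReal (α - α/((j:ℝ)+2)) :=
      (ENNReal.ofReal_lt_ofReal_iff (hq0 j)).mpr hj

lemma pointwiseB (T : X → X) (x : X) :
    lowerRecRate dist T x = 0 ↔
      ∀ j k : ℕ, ∃ r ∈ Ioo (0:ℝ) (min (1/((k:ℝ)+1)) 1),
        ∃ n : ℕ, 1 ≤ n ∧ (n : ℝ) < r ^ (-(1/((j:ℝ)+1))) ∧ dist (T^[n] x) x < r := by
  constructor
  · intro h j k
    set q : ℝ := 1/((j:ℝ)+1) with hqdef
    have hq : 0 < q := by positivity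
    set c : ℝ := min (1/((k:ℝ)+1)) 1 with hcdef
    have hc0 : 0 < c := by
      apply lt_min (by positivity) one_pos
    have hc1 : c ≤ 1 := min_le_right _ _
    have hlim : liminf (recRatio dist T x) (𝓝[>] (0:ℝ)) < ENNReal.ofReal (q/2) := by
      have h' : liminf (recRatio dist T x) (𝓝[>] (0:ℝ)) = 0 := h
      rw [h']
      exact ENNReal.ofReal_pos.mpr (by positivity)
    have hfr : ∃ᶠ s in 𝓝[>] (0:ℝ), recRatio dist T x s < ENNReal.ofReal (q/2) :=
      frequently_lt_of_liminf_lt (by isBoundedDefault) hlim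
    have hIoo : Ioo (0:ℝ) (c^2) ∈ 𝓝[>] (0:ℝ) :=
      Ioo_mem_nhdsGT_of_mem ⟨le_refl 0, by positivity⟩
    obtain ⟨s, hs, hPs⟩ := Filter.frequently_iff.mp hfr hIoo
    have hs0 : 0 < s := hs.1
    have hs1 : s < 1 := lt_of_lt_of_le hs.2 (by nlinarith)
    obtain ⟨n, hn1, hn2, hn3⟩ := (charF T x hs0 hs1 (by positivity : 0 < q/2)).mp hPs
    set r : ℝ := s ^ ((1:ℝ)/2) with hrdef
    have hr0 : 0 < r := Real.rpow_pos_of_pos hs0 _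
    have hrc : r < c := by
      have h1 : s ^ ((1:ℝ)/2) < (c^2) ^ ((1:ℝ)/2) :=
        Real.rpow_lt_rpow hs0.le hs.2 (by norm_num)
      have h2 : (c^2) ^ ((1:ℝ)/2) = c := by
        rw [← Real.rpow_natCast c 2, ← Real.rpow_mul hc0.le]
        norm_num
      rw [← h2]; exact h1
    have hsr : s < r := by
      have := Real.rpow_lt_rpow_of_exponent_gt hs0 hs1 (by norm_num : (1:ℝ)/2 < 1)
      rwa [Real.rpow_one] at this
    refine ⟨r, ⟨hr0, hrc⟩, n, hn1, ?_, lt_of_le_of_lt hn3 hsr⟩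
    have hexp : r ^ (-q) = s ^ (-(q/2)) := by
      rw [hrdef, ← Real.rpow_mul hs0.le]
      congr 1
      ring
    rw [hexp]
    exact hn2
  · intro h
    refine le_antisymm ?_ (zero_le)
    rw [lowerRecRate, liminf_le_iff]
    intro y hy
    obtain ⟨j, hj⟩ : ∃ j : ℕ, ENNReal.ofReal (1/((j:ℝ)+1)) < y := by
      by_cases hytop : y = ⊤
      · exact ⟨0, hytop ▸ ENNReal.ofReal_lt_top⟩
      · have hyt : 0 < y.toReal := ENNReal.toReal_pos hy.ne' hytop
        obtain ⟨j, hjgt⟩ := exists_nat_gt (1/y.toReal)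
        refine ⟨j, ?_⟩
        have h2 : 1/((j:ℝ)+1) < y.toReal := by
          rw [div_lt_iff₀ (by positivity)]
          rw [div_lt_iff₀ hyt] at hjgt
          nlinarith
        calc ENNReal.ofReal (1/((j:ℝ)+1)) < ENNReal.ofReal y.toReal :=
              (ENNReal.ofReal_lt_ofReal_iff hyt).mpr h2
        _ = y := ENNReal.ofReal_toReal hytop
    rw [Filter.frequently_iff]
    intro U hU
    rcases mem_nhdsGT_iff_exists_Ioo_subset.mp hU with ⟨ε, hε, hsub⟩
    obtain ⟨k, hk⟩ := exists_small_k ε hε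
    obtain ⟨r, hr, n, hn1, hn2, hn3⟩ := h j k
    have hr1 : r < 1 := lt_of_lt_of_le hr.2 (min_le_right _ _)
    refine ⟨r, hsub ⟨hr.1, lt_of_lt_of_le hr.2 hk⟩, ?_⟩
    refine lt_trans ?_ hj
    exact (charF T x hr.1 hr1 (by positivity)).mpr ⟨n, hn1, hn2, hn3.le⟩

/-- Openness of `{ν | 1 < ν U + c}` in the weak topology, for `U` open. -/
lemma isOpen_measGT {Y : Type*} [MetricSpace Y] [MeasurableSpace Y] [OpensMeasurableSpace Y]
    {U : Set Y} (hU : IsOpen U) {c : ℝ≥0∞} (hc : c ≤ 1) :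
    IsOpen {ν : ProbabilityMeasure Y | 1 < ν.toMeasure U + c} := by
  rw [isOpen_iff_mem_nhds]
  intro μ hμ
  by_contra hmem
  rw [Filter.mem_iff_inf_principal_compl] at hmem
  set L := 𝓝 μ ⊓ 𝓟 {ν : ProbabilityMeasure Y | 1 < ν.toMeasure U + c}ᶜ with hLdef
  haveI : L.NeBot := ⟨hmem⟩
  have htends : Filter.Tendsto (fun ν : ProbabilityMeasure Y => ν) L (𝓝 μ) :=
    Filter.tendsto_id'.mpr inf_le_left
  have h1 : μ.toMeasure U ≤ L.liminf fun ν : ProbabilityMeasure Y => ν.toMeasure U :=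
    ProbabilityMeasure.le_liminf_measure_open_of_tendsto htends hU
  have h2 : ∀ᶠ ν : ProbabilityMeasure Y in L, ν.toMeasure U ≤ 1 - c := by
    rw [hLdef, Filter.eventually_inf_principal]
    refine Filter.Eventually.of_forall fun ν hν => ?_
    have : ¬ (1 < ν.toMeasure U + c) := hν
    exact ENNReal.le_sub_of_add_le_right (hc.trans_lt ENNReal.one_lt_top).ne (not_lt.mp this)
  have h3 : (L.liminf fun ν : ProbabilityMeasure Y => ν.toMeasure U) ≤ 1 - c :=
    Filter.liminf_le_of_frequently_le h2.frequently
  have h4 : μ.toMeasure U + c ≤ 1 := by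
    calc μ.toMeasure U + c ≤ (1 - c) + c := add_le_add (h1.trans h3) le_rfl
    _ = 1 := tsub_add_cancel_of_le hc
  exact absurd hμ (not_lt.mpr h4)

lemma measure_eq_one_iff {Y : Type*} [MeasurableSpace Y] (m : Measure Y)
    [IsProbabilityMeasure m] (W : Set Y) :
    m W = 1 ↔ ∀ k : ℕ, 1 < m W + ((k:ℝ≥0∞)+1)⁻¹ := by
  constructor
  · intro h k
    rw [h]
    exact ENNReal.lt_add_right ENNReal.one_ne_top (by simp)
  · intro h
    refine le_antisymm prob_le_one ?_
    refine ENNReal.le_of_forall_pos_le_add fun ε hε _ => ?_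
    obtain ⟨n, hn⟩ := ENNReal.exists_inv_nat_lt
      (show ((ε:ℝ≥0∞)) ≠ 0 by exact_mod_cast hε.ne')
    have hmono : ((n:ℝ≥0∞)+1)⁻¹ ≤ ((n:ℝ≥0∞))⁻¹ :=
      ENNReal.inv_le_inv' (le_add_right le_rfl)
    calc (1:ℝ≥0∞) ≤ m W + ((n:ℝ≥0∞)+1)⁻¹ := (h n).le
    _ ≤ m W + ε := add_le_add le_rfl ((hmono.trans hn.le))

lemma aux_Gδ {Y : Type*} [MetricSpace Y] [MeasurableSpace Y] [OpensMeasurableSpace Y]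
    (T : Y → Y) (W : ℕ → ℕ → Set Y) (hW : ∀ j k, IsOpen (W j k))
    (P : Y → Prop) (hP : ∀ x, P x ↔ ∀ j k, x ∈ W j k) :
    IsGδ {μ : {ν : ProbabilityMeasure Y // ν.toMeasure.map T = ν.toMeasure} |
        ∀ᵐ x ∂μ.1.toMeasure, P x} := by
  have hset : {μ : {ν : ProbabilityMeasure Y // ν.toMeasure.map T = ν.toMeasure} |
        ∀ᵐ x ∂μ.1.toMeasure, P x}
      = ⋂ (j : ℕ) (k : ℕ) (m : ℕ), (fun μ : {ν : ProbabilityMeasure Y //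
          ν.toMeasure.map T = ν.toMeasure} => μ.1) ⁻¹'
          {ν : ProbabilityMeasure Y | 1 < ν.toMeasure (W j k) + ((m:ℝ≥0∞)+1)⁻¹} := by
    ext μ
    simp only [mem_setOf_eq, Set.mem_iInter, mem_preimage]
    have h1 : (∀ᵐ x ∂μ.1.toMeasure, P x) ↔ ∀ᵐ x ∂μ.1.toMeasure, ∀ j k, x ∈ W j k :=
      eventually_congr (Filter.Eventually.of_forall fun x => hP x)
    rw [h1, ae_all_iff]
    apply forall_congr'
    intro j
    rw [ae_all_iff]
    apply forall_congr'
    intro k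
    have hmeas : MeasurableSet (W j k) := (hW j k).measurableSet
    have h2 : (∀ᵐ x ∂μ.1.toMeasure, x ∈ W j k) ↔ μ.1.toMeasure (W j k) = 1 := by
      rw [MeasureTheory.ae_iff]
      have hcompl : {x | ¬ x ∈ W j k} = (W j k)ᶜ := rfl
      rw [hcompl, prob_compl_eq_zero_iff hmeas]
    rw [h2, measure_eq_one_iff]
  rw [hset]
  refine IsGδ.iInter fun j => IsGδ.iInter fun k => IsGδ.iInter fun m => IsOpen.isGδ ?_
  refine IsOpen.preimage continuous_subtype_val ?_
  refine isOpen_measGT (hW j k) ?_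
  rw [ENNReal.inv_le_one]
  exact le_add_self

end Aux

/-- Let `X` be a Polish metric space and `T : X → X` continuous. For every
`α > 0`, the set of `T`-invariant Borel probability measures with `R̄(x) ≥ α` `μ`-a.e. is a
`Gδ` subset of `M(T)`, and the set of those with `R̲(x) = 0` `μ`-a.e. is a `Gδ` subset of
`M(T)`. -/
theorem recurrenceRate_sets_Gδ {X : Type*} [MetricSpace X] [CompleteSpace X]
    [TopologicalSpace.SeparableSpace X] [MeasurableSpace X] [BorelSpace X]
    (T : X → X) (hT : Continuous T) (α : ℝ) (hα : 0 < α) :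
    IsGδ {μ : {ν : ProbabilityMeasure X // ν.toMeasure.map T = ν.toMeasure} |
        ∀ᵐ x ∂μ.1.toMeasure, ENNReal.ofReal α ≤ upperRecRate dist T x} ∧
    IsGδ {μ : {ν : ProbabilityMeasure X // ν.toMeasure.map T = ν.toMeasure} |
        ∀ᵐ x ∂μ.1.toMeasure, lowerRecRate dist T x = 0} := by
  constructor
  · refine aux_Gδ T (fun j k => ⋃ r ∈ Ioo (0:ℝ) (min (1/((k:ℝ)+1)) 1),
        {x : X | ∀ n : ℕ, 1 ≤ n → (n:ℝ) ≤ r ^ (-(α - α/((j:ℝ)+2))) → r < dist (T^[n] x) x})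
      (fun j k => isOpen_biUnion fun r _ => isOpen_Eset T hT r _) _ fun x => ?_
    rw [pointwiseA T hα x]
    refine forall_congr' fun j => forall_congr' fun k => ?_
    simp only [Set.mem_iUnion, exists_prop, mem_setOf_eq]
  · refine aux_Gδ T (fun j k => ⋃ r ∈ Ioo (0:ℝ) (min (1/((k:ℝ)+1)) 1),
        {x : X | ∃ n : ℕ, 1 ≤ n ∧ (n:ℝ) < r ^ (-(1/((j:ℝ)+1))) ∧ dist (T^[n] x) x < r})
      (fun j k => isOpen_biUnion fun r _ => isOpen_Fset T hT r _) _ fun x => ?_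
    rw [pointwiseB T x]
    refine forall_congr' fun j => forall_congr' fun k => ?_
    simp only [Set.mem_iUnion, exists_prop, mem_setOf_eq]
end
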